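/- arXiv:1602.04729 — 4 statements merged into one kernel-verified Lean document; each statement's English description precedes it below -/
import Mathlib

section
/- Let c > 2√2. Then for every C > 0 there exist a finitely supported complex sequence (b_n)_{n≥2} and a finitely supported complex sequence (a_n)_{n≥1}, not identically zero, such that ∑_{N≥2} (log N)^{-2} |∑_{d∣N, d≥2} b_d (log d) a_{N/d}|² > C · (∑_{n≥2} |b_n|² n · exp(−c√(log n · log₂ n))) · ∑_{n≥1} |a_n|². In other words, the inequality ‖T_g‖² ≤ C ∑_{n≥2} |b_n|² n exp(−c√(log n log₂ n)) cannot hold for all symbols g when c > 2√2. -/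
open scoped ENNReal

/-- `log₂ x = log log x`, with the convention that it equals `1` for `x ≤ e^e`. -/
noncomputable def loglog (x : ℝ) : ℝ := max 1 (Real.log (Real.log x))

open Finset Filter

section AuxVolterra

theorem prodset_injOn' (PP : Finset ℕ) (hP : ∀ p ∈ PP, p.Prime) (j : ℕ) :
    Set.InjOn (fun S : Finset ℕ => ∏ p ∈ S, p) (PP.powersetCard j : Set (Finset ℕ)) := by
  intro S hS T hT h
  simp only [mem_coe, mem_powersetCard] at hS hT
  simp only at h
  have h1 : Nat.primeFactors (∏ p ∈ S, p) = S := Nat.primeFactors_prod (fun p hp => hP p (hS.1 hp))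
  have h2 : Nat.primeFactors (∏ p ∈ T, p) = T := Nat.primeFactors_prod (fun p hp => hP p (hT.1 hp))
  rw [← h1, ← h2, h]

theorem centralBinom_le_pow' (n : ℕ) (hn : 0 < n) :
    Nat.centralBinom n ≤ (2*n) ^ ((Finset.range (2*n+1)).filter Nat.Prime).card := by
  have h0 : Nat.centralBinom n ≠ 0 := (Nat.centralBinom_pos n).ne'
  conv_lhs => rw [← Nat.factorization_prod_pow_eq_self h0]
  rw [Nat.prod_factorization_eq_prod_primeFactors]
  have hsub : (Nat.centralBinom n).primeFactors ⊆ (Finset.range (2*n+1)).filter Nat.Prime := by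
    intro p hp
    have hpp : p.Prime := Nat.prime_of_mem_primeFactors hp
    have hpos : 0 < (Nat.centralBinom n).factorization p :=
      Nat.Prime.factorization_pos_of_dvd hpp h0 (Nat.dvd_of_mem_primeFactors hp)
    have hle : p ^ (Nat.centralBinom n).factorization p ≤ 2*n := by
      unfold Nat.centralBinom
      exact Nat.pow_factorization_choose_le (by omega)
    have : p ≤ 2*n := le_trans (Nat.le_self_pow hpos.ne' p) hle
    simp [Finset.mem_filter, Finset.mem_range, hpp]
    omega
  calc ∏ p ∈ (Nat.centralBinom n).primeFactors, p ^ (Nat.centralBinom n).factorization p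
      ≤ ∏ _p ∈ (Nat.centralBinom n).primeFactors, 2*n := by
        apply Finset.prod_le_prod (by intros; positivity)
        intro p hp
        unfold Nat.centralBinom
        exact Nat.pow_factorization_choose_le (by omega)
    _ = (2*n) ^ (Nat.centralBinom n).primeFactors.card := by rw [Finset.prod_const]
    _ ≤ (2*n) ^ ((Finset.range (2*n+1)).filter Nat.Prime).card := by
        apply Nat.pow_le_pow_right (by omega)
        exact Finset.card_le_card hsub

theorem chebyshev_lower' : ∀ᶠ M : ℕ in atTop,
    (M:ℝ)/(2*Real.log M) ≤ (((Finset.range (M+1)).filter Nat.Prime).card : ℝ) := by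
  have hlt : (0:ℝ) < Real.log 2 - 1/2 := by
    have := Real.log_two_gt_d9; linarith
  have hev : ∀ᶠ x : ℝ in atTop, 3*Real.log x ≤ (Real.log 2 - 1/2) * x := by
    have h1 : (fun x:ℝ => 3*Real.log x) =o[atTop] (fun x:ℝ => x) := by
      exact (Real.isLittleO_log_id_atTop.const_mul_left 3)
    filter_upwards [h1.bound hlt, eventually_ge_atTop (1:ℝ)] with x hx hx1
    calc 3*Real.log x ≤ ‖3*Real.log x‖ := le_abs_self _
      _ ≤ (Real.log 2 - 1/2) * ‖x‖ := hx
      _ = (Real.log 2 - 1/2) * x := by rw [Real.norm_of_nonneg (by linarith)]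
  have hev' : ∀ᶠ M : ℕ in atTop, 3*Real.log M ≤ (Real.log 2 - 1/2) * M :=
    tendsto_natCast_atTop_atTop.eventually hev
  filter_upwards [hev', eventually_ge_atTop 4] with M hM hM4
  set n := M/2 with hn
  have h2n : 2*n ≤ M := Nat.mul_div_le M 2
  have h2n' : M ≤ 2*n+1 := by omega
  have hn1 : 1 ≤ n := by omega
  set π2 := ((Finset.range (2*n+1)).filter Nat.Prime).card
  set π := ((Finset.range (M+1)).filter Nat.Prime).card
  have hππ : π2 ≤ π := by
    apply Finset.card_le_card
    apply Finset.filter_subset_filter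
    apply Finset.range_subset_range.2; omega
  have hnat : 4^n ≤ (M+1) * M^π := by
    calc 4^n ≤ (2*n+1) * Nat.centralBinom n := Nat.four_pow_le_two_mul_add_one_mul_central_binom n
      _ ≤ (M+1) * (2*n)^π2 := Nat.mul_le_mul (by omega) (centralBinom_le_pow' n (by omega))
      _ ≤ (M+1) * M^π := by
          apply Nat.mul_le_mul_left
          calc (2*n)^π2 ≤ M^π2 := Nat.pow_le_pow_left h2n _
            _ ≤ M^π := Nat.pow_le_pow_right (by omega) hππ
  have hMR : (2:ℝ) ≤ (M:ℝ) := by exact_mod_cast (by omega : 2 ≤ M)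
  have hlogM : 0 < Real.log M := Real.log_pos (by linarith)
  have hreal : (n:ℝ) * Real.log 4 ≤ Real.log (M+1) + π * Real.log M := by
    have h1 : ((4:ℕ):ℝ)^n ≤ ((M+1:ℕ):ℝ) * ((M:ℕ):ℝ)^π := by exact_mod_cast hnat
    have h2 := Real.log_le_log (by positivity) h1
    rw [Real.log_pow, Real.log_mul (by positivity) (by positivity), Real.log_pow] at h2
    push_cast at h2 ⊢
    linarith
  have hlogM1 : Real.log ((M:ℝ)+1) ≤ 2 * Real.log M := by
    calc Real.log ((M:ℝ)+1) ≤ Real.log ((M:ℝ)^2) := by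
          apply Real.log_le_log (by positivity); nlinarith
      _ = 2 * Real.log M := by rw [Real.log_pow]; push_cast; ring
  have hlog4 : Real.log 4 = 2 * Real.log 2 := by
    rw [show (4:ℝ) = 2^2 by norm_num, Real.log_pow]; push_cast; ring
  have hnM : ((M:ℝ)-1)/2 ≤ (n:ℝ) := by
    have : (M:ℝ) ≤ 2*(n:ℝ)+1 := by exact_mod_cast h2n'
    linarith
  have hkey : (M:ℝ)/2 ≤ (π:ℝ) * Real.log M := by
    have e1 : ((M:ℝ)-1) * Real.log 2 ≤ (n:ℝ) * Real.log 4 := by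
      rw [hlog4]
      have h2pos : (0:ℝ) < Real.log 2 := Real.log_pos (by norm_num)
      nlinarith
    have e2 : (M:ℝ)*(Real.log 2 - 1/2) ≥ 3*Real.log M := by linarith [hM]
    have h2pos : (0:ℝ) < Real.log 2 := Real.log_pos (by norm_num)
    have hl2 : Real.log 2 ≤ Real.log M := Real.log_le_log (by norm_num) hMR
    nlinarith
  rw [div_le_iff₀ (by positivity)]
  calc (M:ℝ) = ((M:ℝ)/2) * 2 := by ring
    _ ≤ ((π:ℝ) * Real.log M) * 2 := by linarith
    _ = (π:ℝ) * (2*Real.log M) := by ring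

theorem choose_helper' (k r s : ℕ) (h : r + s ≤ k) :
    k.choose (r+s) * (r+s).choose r = k.choose r * (k-r).choose s := by
  have h1 : r ≤ k := by omega
  have h2 : s ≤ k - r := by omega
  have h3 : r ≤ r + s := by omega
  have key : k.choose (r+s) * (r+s).choose r * (r.factorial * s.factorial * (k-(r+s)).factorial)
      = k.choose r * (k-r).choose s * (r.factorial * s.factorial * (k-(r+s)).factorial) := by
    have e1 := Nat.choose_mul_factorial_mul_factorial h
    have e2 := Nat.choose_mul_factorial_mul_factorial h3
    have e3 := Nat.choose_mul_factorial_mul_factorial h1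
    have e4 := Nat.choose_mul_factorial_mul_factorial h2
    have hkr : k - r - s = k - (r+s) := by omega
    have hrs : r + s - r = s := by omega
    rw [hrs] at e2
    rw [hkr] at e4
    calc k.choose (r+s) * (r+s).choose r * (r.factorial * s.factorial * (k-(r+s)).factorial)
        = ((r+s).choose r * r.factorial * s.factorial) * k.choose (r+s) * (k-(r+s)).factorial := by
          ring
      _ = (r+s).factorial * k.choose (r+s) * (k-(r+s)).factorial := by rw [e2]
      _ = k.choose (r+s) * (r+s).factorial * (k-(r+s)).factorial := by ring
      _ = k.factorial := e1
      _ = k.choose r * r.factorial * (k-r).factorial := e3.symm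
      _ = (k.choose r * r.factorial) * ((k-r).choose s * s.factorial * (k-(r+s)).factorial) := by
          rw [e4]
      _ = k.choose r * (k-r).choose s * (r.factorial * s.factorial * (k-(r+s)).factorial) := by
          ring
  have hpos : 0 < r.factorial * s.factorial * (k-(r+s)).factorial := by positivity
  exact Nat.eq_of_mul_eq_mul_right hpos key

theorem choose_ratio' (k r s : ℕ) (h : 2*(r+s) ≤ k) :
    k.choose s ≤ 2^r * (k-r).choose s := by
  induction r with
  | zero => simp
  | succ r ih =>
      have hr : 2*(r+s) ≤ k := by omega
      have step : (k-r).choose s ≤ 2 * (k-r-1).choose s := by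
        rcases Nat.eq_zero_or_pos s with hs | hs
        · subst hs; simp
        · obtain ⟨s', rfl⟩ : ∃ s', s = s'+1 := ⟨s-1, by omega⟩
          have hm : k - r = (k - r - 1) + 1 := by omega
          have pascal : (k-r).choose (s'+1) = (k-r-1).choose s' + (k-r-1).choose (s'+1) := by
            rw [hm, Nat.choose_succ_succ]; simp
          have mono : (k-r-1).choose s' ≤ (k-r-1).choose (s'+1) := by
            apply Nat.choose_le_succ_of_lt_half_left
            omega
          omega
      calc k.choose s ≤ 2^r * (k-r).choose s := ih hr
        _ ≤ 2^r * (2 * (k-r-1).choose s) := Nat.mul_le_mul_left _ step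
        _ = 2^(r+1) * (k-(r+1)).choose s := by
            have : k - r - 1 = k - (r+1) := by omega
            rw [this]; ring

theorem cube_div_le_exp (x : ℝ) (hx : 0 ≤ x) : x^3/27 ≤ Real.exp x := by
  have h1 : x/3 + 1 ≤ Real.exp (x/3) := by
    have := Real.add_one_le_exp (x/3); linarith
  have h2 : Real.exp x = (Real.exp (x/3))^3 := by
    rw [← Real.exp_nat_mul]; push_cast; ring_nf
  have h3 : (x/3)^3 ≤ (x/3+1)^3 := by
    apply pow_le_pow_left₀ (by positivity); linarith
  have h4 : (x/3+1)^3 ≤ (Real.exp (x/3))^3 := by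
    apply pow_le_pow_left₀ (by positivity) h1
  calc x^3/27 = (x/3)^3 := by ring
    _ ≤ (x/3+1)^3 := h3
    _ ≤ (Real.exp (x/3))^3 := h4
    _ = Real.exp x := h2.symm

theorem sigma_lower
    (PP : Finset ℕ) (hprime : ∀ p ∈ PP, p.Prime)
    (r s : ℕ) (hr1 : 1 ≤ r)
    (T : Finset ℕ) (hT : T ⊆ PP) (hTcard : T.card = r + s)
    (Pn : ℕ) (hup : ∀ p ∈ PP, p ≤ Pn) (Q : ℝ) (hQ1 : 1 ≤ Q) (hlow : ∀ p ∈ PP, Q ≤ (p:ℝ))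
    (Dr Ds : Finset ℕ)
    (hDr : Dr = (PP.powersetCard r).image (fun S => ∏ p ∈ S, p))
    (hDs : Ds = (PP.powersetCard s).image (fun S => ∏ p ∈ S, p)) :
    ((r+s).choose r : ℝ) * (((Pn:ℝ)^r)^(-(1/2):ℝ) * ((r:ℝ)*Real.log Q))
      ≤ ∑ d ∈ (∏ p ∈ T, p).divisors.filter (fun d => 2 ≤ d),
          (if d ∈ Dr then ((d:ℝ))^(-(1/2):ℝ) else 0) * Real.log (d:ℝ)
            * (if (∏ p ∈ T, p)/d ∈ Ds then (1:ℝ) else 0) := by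
  set N := ∏ p ∈ T, p with hN
  set F : ℕ → ℝ := fun d =>
    (if d ∈ Dr then ((d:ℝ))^(-(1/2):ℝ) else 0) * Real.log (d:ℝ)
      * (if N/d ∈ Ds then (1:ℝ) else 0) with hF
  have hQ0 : 0 < Q := lt_of_lt_of_le one_pos hQ1
  have hprimeT : ∀ p ∈ T, p.Prime := fun p hp => hprime p (hT hp)
  have hNpos : 0 < N := Finset.prod_pos (fun p hp => (hprimeT p hp).pos)
  have hFnonneg : ∀ d ∈ N.divisors.filter (fun d => 2 ≤ d), 0 ≤ F d := by
    intro d hd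
    simp only [Finset.mem_filter, Nat.mem_divisors] at hd
    have hd1 : 1 ≤ d := by omega
    have hlog : 0 ≤ Real.log (d:ℝ) := Real.log_nonneg (by exact_mod_cast hd1)
    rw [hF]
    have hb1 : (0:ℝ) ≤ (if d ∈ Dr then ((d:ℝ))^(-(1/2):ℝ) else 0) := by
      by_cases h : d ∈ Dr
      · simp only [h, if_true]; exact Real.rpow_nonneg (Nat.cast_nonneg d) _
      · simp [h]
    have hb2 : (0:ℝ) ≤ (if N/d ∈ Ds then (1:ℝ) else 0) := by
      by_cases h : N/d ∈ Ds <;> simp [h]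
    exact mul_nonneg (mul_nonneg hb1 hlog) hb2
  -- the image of powersetCard r T
  set I : Finset ℕ := (T.powersetCard r).image (fun S => ∏ p ∈ S, p) with hI
  have hIsub : I ⊆ N.divisors.filter (fun d => 2 ≤ d) := by
    intro m hm
    rw [hI, Finset.mem_image] at hm
    obtain ⟨R, hR, rfl⟩ := hm
    rw [Finset.mem_powersetCard] at hR
    have hdvd : (∏ p ∈ R, p) ∣ N := Finset.prod_dvd_prod_of_subset _ _ _ hR.1
    have hpos : 0 < ∏ p ∈ R, p := Finset.prod_pos (fun p hp => (hprimeT p (hR.1 hp)).pos)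
    have h2 : 2 ≤ ∏ p ∈ R, p := by
      obtain ⟨p, hp⟩ := Finset.card_pos.mp (by omega : 0 < R.card)
      have hpP : p.Prime := hprimeT p (hR.1 hp)
      have : p ∣ ∏ q ∈ R, q := Finset.dvd_prod_of_mem _ hp
      calc 2 ≤ p := hpP.two_le
        _ ≤ ∏ q ∈ R, q := Nat.le_of_dvd hpos this
    simp only [Finset.mem_filter, Nat.mem_divisors]
    exact ⟨⟨hdvd, hNpos.ne'⟩, h2⟩
  have step1 : ∑ m ∈ I, F m ≤ ∑ d ∈ N.divisors.filter (fun d => 2 ≤ d), F d :=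
    Finset.sum_le_sum_of_subset_of_nonneg hIsub (fun d hd _ => hFnonneg d hd)
  have hinj : Set.InjOn (fun S : Finset ℕ => ∏ p ∈ S, p) (T.powersetCard r : Set (Finset ℕ)) :=
    prodset_injOn' T hprimeT r
  have step2 : ∑ m ∈ I, F m = ∑ R ∈ T.powersetCard r, F (∏ p ∈ R, p) := by
    rw [hI]
    exact Finset.sum_image (fun x hx y hy h => hinj (by exact_mod_cast hx) (by exact_mod_cast hy) h)
  -- per-R lower bound
  have hperR : ∀ R ∈ T.powersetCard r,
      ((Pn:ℝ)^r)^(-(1/2):ℝ) * ((r:ℝ)*Real.log Q) ≤ F (∏ p ∈ R, p) := by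
    intro R hR
    rw [Finset.mem_powersetCard] at hR
    obtain ⟨hRT, hRcard⟩ := hR
    set m : ℕ := ∏ p ∈ R, p with hm
    have hmpos : 0 < m := Finset.prod_pos (fun p hp => (hprimeT p (hRT hp)).pos)
    -- m ∈ Dr
    have hmDr : m ∈ Dr := by
      rw [hDr, Finset.mem_image]
      exact ⟨R, Finset.mem_powersetCard.mpr ⟨hRT.trans hT, hRcard⟩, rfl⟩
    -- N/m ∈ Ds
    have hsd : (∏ p ∈ T \ R, p) * (∏ p ∈ R, p) = N := Finset.prod_sdiff hRT
    have hNm : N / m = ∏ p ∈ T \ R, p := by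
      rw [hm, ← hsd, Nat.mul_div_cancel _ hmpos]
    have hmDs : N/m ∈ Ds := by
      rw [hDs, Finset.mem_image, hNm]
      refine ⟨T \ R, Finset.mem_powersetCard.mpr ⟨(Finset.sdiff_subset).trans hT, ?_⟩, rfl⟩
      rw [Finset.card_sdiff_of_subset hRT, hTcard, hRcard]; omega
    rw [hF]
    simp only [hmDr, hmDs, if_true]
    rw [mul_one]
    -- bounds
    have hmub : (m:ℝ) ≤ (Pn:ℝ)^r := by
      have : m ≤ Pn^r := by
        calc m ≤ Pn ^ R.card := Finset.prod_le_pow_card R _ Pn (fun p hp => hup p (hRT.trans hT hp))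
          _ = Pn^r := by rw [hRcard]
      exact_mod_cast this
    have hrpow : ((Pn:ℝ)^r)^(-(1/2):ℝ) ≤ (m:ℝ)^(-(1/2):ℝ) :=
      Real.rpow_le_rpow_of_nonpos (by exact_mod_cast hmpos) hmub (by norm_num)
    have hlogm : (r:ℝ)*Real.log Q ≤ Real.log (m:ℝ) := by
      have hmlb : Q^r ≤ (m:ℝ) := by
        have : ∏ _p ∈ R, Q ≤ ∏ p ∈ R, (p:ℝ) :=
          Finset.prod_le_prod (fun _ _ => le_of_lt hQ0) (fun p hp => hlow p (hRT.trans hT hp))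
        rw [Finset.prod_const, hRcard] at this
        calc Q^r ≤ ∏ p ∈ R, (p:ℝ) := this
          _ = (m:ℝ) := by rw [hm]; push_cast; rfl
      have hlp : Real.log (Q^r) = (r:ℝ)*Real.log Q := by rw [Real.log_pow]
      calc (r:ℝ)*Real.log Q = Real.log (Q^r) := hlp.symm
        _ ≤ Real.log (m:ℝ) := Real.log_le_log (pow_pos hQ0 r) hmlb
    apply mul_le_mul hrpow hlogm (mul_nonneg (Nat.cast_nonneg r) (Real.log_nonneg hQ1))
      (Real.rpow_nonneg (Nat.cast_nonneg m) _)
  calc ((r+s).choose r : ℝ) * (((Pn:ℝ)^r)^(-(1/2):ℝ) * ((r:ℝ)*Real.log Q))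
      = ∑ _R ∈ T.powersetCard r, ((Pn:ℝ)^r)^(-(1/2):ℝ) * ((r:ℝ)*Real.log Q) := by
        rw [Finset.sum_const, Finset.card_powersetCard, hTcard]
        rw [nsmul_eq_mul]
    _ ≤ ∑ R ∈ T.powersetCard r, F (∏ p ∈ R, p) := Finset.sum_le_sum (by
        intro R hR
        have := hperR R hR
        linarith [this])
    _ = ∑ m ∈ I, F m := step2.symm
    _ ≤ ∑ d ∈ N.divisors.filter (fun d => 2 ≤ d), F d := step1


theorem main_numeric (c C δ : ℝ) (r s k : ℕ)
    (hC : 0 < C) (hδ0 : 0 < δ) (hc0 : 0 < c)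
    (hr : 3 ≤ r)
    (hk : 2*(r+s) ≤ k)
    (hs1 : 1 ≤ s)
    (hsP : ((r:ℝ)^r)/(32*((r:ℝ)*Real.log r)) ≤ (s:ℝ))
    (hsub : (s:ℝ) ≤ (r:ℝ)^r)
    (hlogy : 2*Real.log r ≤ Real.log (δ*((r:ℝ)*((r:ℝ)*Real.log r))))
    (hE : Real.log C < (c*Real.sqrt (2*δ) - 4)*((r:ℝ)*Real.log r)
        - (r:ℝ)*(Real.log 64 + Real.log (Real.log r)) + 2*Real.log δ - 2*Real.log 2) :
    C * (k.choose r : ℝ) * Real.exp (-(c*Real.sqrt ((δ*((r:ℝ)*((r:ℝ)*Real.log r)))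
        * Real.log (δ*((r:ℝ)*((r:ℝ)*Real.log r)))))) * (k.choose s : ℝ)
      < (k.choose (r+s) : ℝ) *
        ((((r+s).choose r : ℝ) * (((r:ℝ)^r)^r)^(-(1/2):ℝ)
            * (δ*(r:ℝ)*((r:ℝ)*Real.log r)))^2 / (((r+s:ℕ):ℝ)*((r:ℝ)*Real.log r))^2) := by
  have hr1 : (1:ℝ) ≤ (r:ℝ) := by exact_mod_cast (by omega : 1 ≤ r)
  have hr3 : (3:ℝ) ≤ (r:ℝ) := by exact_mod_cast hr
  have hlogr : 1 < Real.log r := by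
    rw [← Real.log_exp 1]
    apply Real.log_lt_log (Real.exp_pos 1)
    calc Real.exp 1 < 2.7182818286 := Real.exp_one_lt_d9
      _ ≤ (r:ℝ) := by linarith
  set w : ℝ := (r:ℝ)*Real.log r with hw
  have hw0 : 0 < w := by positivity
  have hw1 : 1 < w := by nlinarith
  set y : ℝ := δ*((r:ℝ)*((r:ℝ)*Real.log r)) with hy
  have hy0 : 0 < y := by positivity
  set t : ℕ := r + s with ht
  have htpos : 0 < t := by omega
  have htR : (0:ℝ) < (t:ℝ) := by exact_mod_cast htpos
  have hs0 : (0:ℝ) < (s:ℝ) := by exact_mod_cast hs1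
  have hr0 : (0:ℝ) < (r:ℝ) := by linarith
  have hrr0 : (0:ℝ) < (r:ℝ)^r := by positivity
  have hlogrr : Real.log ((r:ℝ)^r) = w := by rw [Real.log_pow]
  have htcast : (t:ℝ) = (r:ℝ) + (s:ℝ) := by rw [ht]; push_cast; ring
  have h1 : (k.choose t : ℝ) * ((t).choose r : ℝ) = (k.choose r : ℝ) * ((k-r).choose s : ℝ) := by
    have h0 := choose_helper' k r s (by omega)
    exact_mod_cast congrArg (Nat.cast : ℕ → ℝ) h0
  have h2 : (k.choose s : ℝ) ≤ 2^r * ((k-r).choose s : ℝ) := by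
    exact_mod_cast (choose_ratio' k r s hk)
  have h3 : ((s:ℝ)/(r:ℝ))^r ≤ ((t).choose r : ℝ) := by
    have hb : (((t + 1 - r : ℕ) ^ r : ℕ) : ℝ) / (r.factorial : ℝ) ≤ (t.choose r : ℝ) := by
      have := Nat.pow_le_choose (α := ℝ) r t
      push_cast at this ⊢
      convert this using 3
    have hts : t + 1 - r = s + 1 := by omega
    rw [hts] at hb
    have hfac : (r.factorial : ℝ) ≤ (r:ℝ)^r := by exact_mod_cast Nat.factorial_le_pow r
    have hfac0 : (0:ℝ) < (r.factorial : ℝ) := by exact_mod_cast r.factorial_pos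
    calc ((s:ℝ)/(r:ℝ))^r = (s:ℝ)^r / ((r:ℝ)^r) := div_pow _ _ _
      _ ≤ ((s+1:ℕ):ℝ)^r / (r.factorial : ℝ) := by
          apply div_le_div₀ (by positivity) _ hfac0 hfac
          apply pow_le_pow_left₀ (le_of_lt hs0)
          push_cast; linarith
      _ ≤ (t.choose r : ℝ) := by
          calc ((s+1:ℕ):ℝ)^r / (r.factorial : ℝ)
              = (((s + 1 : ℕ) ^ r : ℕ) : ℝ) / (r.factorial : ℝ) := by push_cast; ring
            _ ≤ _ := hb
  set D : ℝ := δ*(r:ℝ)*w with hD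
  have hD0 : 0 < D := by positivity
  set Pinv : ℝ := (((r:ℝ)^r)^r)⁻¹ with hPinv
  have hPneg : ((((r:ℝ)^r)^r)^(-(1/2):ℝ))^2 = Pinv := by
    have h0 : (0:ℝ) ≤ ((r:ℝ)^r)^r := by positivity
    rw [← Real.rpow_natCast ((((r:ℝ)^r)^r)^(-(1/2):ℝ)) 2, ← Real.rpow_mul h0]
    norm_num
    exact (Real.rpow_neg_one _)
  have hPinv0 : 0 < Pinv := by positivity
  set RHSprod : ℝ := ((s:ℝ)/(r:ℝ))^r * (Pinv * D^2) / ((2:ℝ)^r * ((t:ℝ)*w)^2) with hRHS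
  have hRHS0 : 0 < RHSprod := div_pos (by positivity) (by positivity)
  set E : ℝ := Real.exp (-(c*Real.sqrt (y * Real.log y))) with hEdef
  have hE0 : 0 < E := Real.exp_pos _
  -- Step C
  have hmain : C * E < RHSprod := by
    have hsqrt : c*Real.sqrt (2*δ) * w ≤ c*Real.sqrt (y * Real.log y) := by
      have hyy : 2*δ*w^2 ≤ y * Real.log y := by
        have h5 : y * (2*Real.log r) ≤ y * Real.log y :=
          mul_le_mul_of_nonneg_left hlogy (le_of_lt hy0)
        calc 2*δ*w^2 = y * (2*Real.log r) := by rw [hy, hw]; ring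
          _ ≤ y * Real.log y := h5
      have h5 : Real.sqrt (2*δ*w^2) ≤ Real.sqrt (y*Real.log y) := Real.sqrt_le_sqrt hyy
      have h6 : Real.sqrt (2*δ*w^2) = Real.sqrt (2*δ) * w := by
        rw [Real.sqrt_mul (by positivity), Real.sqrt_sq (le_of_lt hw0)]
      rw [h6] at h5
      have := mul_le_mul_of_nonneg_left h5 (le_of_lt hc0)
      linarith [this]
    -- log computations
    have hlogPinv : Real.log Pinv = -((r:ℝ)*w) := by
      rw [hPinv, Real.log_inv, Real.log_pow, hlogrr]
    have hlogw : Real.log w = Real.log r + Real.log (Real.log r) :=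
      Real.log_mul (ne_of_gt hr0) (by positivity)
    have hlogD : Real.log D = Real.log δ + Real.log r + Real.log w := by
      rw [hD, Real.log_mul (by positivity) (ne_of_gt hw0), Real.log_mul (ne_of_gt hδ0) (ne_of_gt hr0)]
    have hlogsr : Real.log ((s:ℝ)/(r:ℝ)) = Real.log s - Real.log r :=
      Real.log_div (ne_of_gt hs0) (ne_of_gt hr0)
    have hlogs : w - (Real.log 32 + Real.log w) ≤ Real.log s := by
      have h7 : Real.log ((r:ℝ)^r/(32*w)) ≤ Real.log s :=
        Real.log_le_log (by positivity) hsP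
      rw [Real.log_div (ne_of_gt hrr0) (by positivity), hlogrr,
          Real.log_mul (by norm_num) (ne_of_gt hw0)] at h7
      linarith
    have hlogt : Real.log (t:ℝ) ≤ Real.log 2 + w := by
      have h8 : (t:ℝ) ≤ 2*((r:ℝ)^r) := by
        have h9 : (r:ℝ) ≤ (r:ℝ)^r := le_self_pow₀ hr1 (by omega)
        rw [htcast]
        linarith
      calc Real.log (t:ℝ) ≤ Real.log (2*((r:ℝ)^r)) := Real.log_le_log htR h8
        _ = Real.log 2 + w := by rw [Real.log_mul (by norm_num) (ne_of_gt hrr0), hlogrr]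
    have hlog64 : Real.log 64 = Real.log 32 + Real.log 2 := by
      rw [show (64:ℝ) = 32*2 by norm_num, Real.log_mul (by norm_num) (by norm_num)]
    have hlogr0 : (0:ℝ) ≤ Real.log r := by linarith
    have hlogRHS : -4*w - (r:ℝ)*(Real.log 64 + Real.log (Real.log r)) + 2*Real.log δ - 2*Real.log 2
        ≤ Real.log RHSprod := by
      have hXpos : (0:ℝ) < ((s:ℝ)/(r:ℝ))^r * (Pinv * D^2) := by positivity
      have hYpos : (0:ℝ) < ((2:ℝ)^r * ((t:ℝ)*w)^2) := by positivity
      have l1 : Real.log (((s:ℝ)/(r:ℝ))^r) = (r:ℝ) * (Real.log s - Real.log r) := by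
        rw [Real.log_pow, hlogsr]
      have l2 : Real.log (D^2) = 2*Real.log D := by
        rw [Real.log_pow]; push_cast; ring
      have l3 : Real.log (Pinv * D^2) = -((r:ℝ)*w) + 2*Real.log D := by
        rw [Real.log_mul (ne_of_gt hPinv0) (by positivity), hlogPinv, l2]
      have l4 : Real.log (((t:ℝ)*w)^2) = 2*(Real.log t + Real.log w) := by
        rw [Real.log_pow, Real.log_mul (ne_of_gt htR) (ne_of_gt hw0)]; push_cast; ring
      have l5 : Real.log ((2:ℝ)^r) = (r:ℝ)*Real.log 2 := by
        rw [Real.log_pow]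
      have l7 : Real.log (((s:ℝ)/(r:ℝ))^r * (Pinv * D^2))
          = (r:ℝ) * (Real.log s - Real.log r) + (-((r:ℝ)*w) + 2*Real.log D) := by
        rw [Real.log_mul (by positivity) (by positivity), l1, l3]
      have l6 : Real.log ((2:ℝ)^r * ((t:ℝ)*w)^2) = (r:ℝ)*Real.log 2 + 2*(Real.log t + Real.log w) := by
        rw [Real.log_mul (by positivity) (by positivity), l4, l5]
      have l8 : Real.log RHSprod = (r:ℝ) * (Real.log s - Real.log r) + (-((r:ℝ)*w) + 2*Real.log D)
          - ((r:ℝ)*Real.log 2 + 2*(Real.log t + Real.log w)) := by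
        rw [hRHS, Real.log_div (ne_of_gt hXpos) (ne_of_gt hYpos), l7, l6]
      rw [l8, hlogD]
      have hint1 := mul_le_mul_of_nonneg_left hlogs (by linarith : (0:ℝ) ≤ (r:ℝ))
      have hint2 := mul_le_mul_of_nonneg_left hlogt (by norm_num : (0:ℝ) ≤ 2)
      have h9 : (r:ℝ)*Real.log w = (r:ℝ)*Real.log r + (r:ℝ)*Real.log (Real.log r) := by
        rw [hlogw]; ring
      have h10 : (r:ℝ)*(w - (Real.log 32 + Real.log w)) = (r:ℝ)*w - (r:ℝ)*Real.log 32 - (r:ℝ)*Real.log w := by ring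
      have h11 : (r:ℝ) * (Real.log s - Real.log r) = (r:ℝ)*Real.log s - (r:ℝ)*Real.log r := by ring
      have h12 : (r:ℝ)*(Real.log 64 + Real.log (Real.log r))
          = (r:ℝ)*Real.log 32 + (r:ℝ)*Real.log 2 + (r:ℝ)*Real.log (Real.log r) := by
        rw [hlog64]; ring
      rw [hlogw]
      linarith [hint1, hint2, h9, h10, h11, h12, hw, hlogr0, hw0]
    have hCE : Real.log (C*E) < Real.log RHSprod := by
      rw [Real.log_mul (ne_of_gt hC) (ne_of_gt hE0), hEdef, Real.log_exp]
      have : Real.log C - c*Real.sqrt (2*δ)*w < -4*w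
          - (r:ℝ)*(Real.log 64 + Real.log (Real.log r)) + 2*Real.log δ - 2*Real.log 2 := by
        linarith
      linarith
    calc C*E = Real.exp (Real.log (C*E)) := (Real.exp_log (by positivity)).symm
      _ < Real.exp (Real.log RHSprod) := Real.exp_lt_exp.mpr hCE
      _ = RHSprod := Real.exp_log hRHS0
  -- Step B
  have hkr0 : (0:ℝ) < (k.choose r : ℝ) := by
    exact_mod_cast Nat.choose_pos (by omega : r ≤ k)
  have hks0 : (0:ℝ) < (k.choose s : ℝ) := by
    exact_mod_cast Nat.choose_pos (by omega : s ≤ k)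
  set Θ : ℝ := Pinv * D^2 / ((t:ℝ)*w)^2 with hΘ
  have hΘ0 : 0 < Θ := by positivity
  have hexp : (((t).choose r : ℝ) * (((r:ℝ)^r)^r)^(-(1/2):ℝ) * D)^2 / (((t:ℕ):ℝ)*w)^2
      = ((t).choose r : ℝ)^2 * Θ := by
    rw [hΘ]; rw [mul_pow, mul_pow, hPneg]; ring
  have hgoal2 : (k.choose r : ℝ) * (k.choose s : ℝ) * RHSprod
      ≤ (k.choose t : ℝ) * (((t).choose r : ℝ)^2 * Θ) := by
    have e1 : (k.choose t : ℝ) * (((t).choose r : ℝ)^2 * Θ)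
        = ((k.choose r : ℝ) * ((k-r).choose s : ℝ)) * (((t).choose r : ℝ) * Θ) := by
      rw [← h1]; ring
    have e2 : (k.choose r : ℝ) * (k.choose s : ℝ) * RHSprod
        = (k.choose r : ℝ) * (((k.choose s : ℝ) * ((s:ℝ)/(r:ℝ))^r) * Θ) / 2^r := by
      rw [hRHS, hΘ]; field_simp
    have e3 : (k.choose s : ℝ) * ((s:ℝ)/(r:ℝ))^r ≤ (2^r * ((k-r).choose s : ℝ)) * ((t).choose r : ℝ) :=
      mul_le_mul h2 h3 (by positivity) (by positivity)
    calc (k.choose r : ℝ) * (k.choose s : ℝ) * RHSprod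
        = (k.choose r : ℝ) * (((k.choose s : ℝ) * ((s:ℝ)/(r:ℝ))^r) * Θ) / 2^r := e2
      _ ≤ (k.choose r : ℝ) * (((2^r * ((k-r).choose s : ℝ)) * ((t).choose r : ℝ)) * Θ) / 2^r := by
          gcongr
      _ = ((k.choose r : ℝ) * ((k-r).choose s : ℝ)) * (((t).choose r : ℝ) * Θ) := by
          field_simp
      _ = (k.choose t : ℝ) * (((t).choose r : ℝ)^2 * Θ) := e1.symm
  calc C * (k.choose r : ℝ) * E * (k.choose s : ℝ)
      = (k.choose r : ℝ) * (k.choose s : ℝ) * (C*E) := by ring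
    _ < (k.choose r : ℝ) * (k.choose s : ℝ) * RHSprod := by
        apply mul_lt_mul_of_pos_left hmain (by positivity)
    _ ≤ (k.choose t : ℝ) * (((t).choose r : ℝ)^2 * Θ) := hgoal2
    _ = (k.choose t : ℝ) * ((((t).choose r : ℝ) * (((r:ℝ)^r)^r)^(-(1/2):ℝ) * D)^2 / (((t:ℕ):ℝ)*w)^2) := by
        rw [hexp]





set_option maxHeartbeats 2000000 in
theorem volterra_assembly (c C δ : ℝ) (hC : 0 < C) (hc0 : 0 < c) (hδ0 : 0 < δ) (hδ1 : δ < 1)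
    (r : ℕ) (hr3 : 3 ≤ r) (hlog2 : 2 ≤ Real.log r)
    (s : ℕ) (hs1 : 1 ≤ s)
    (PrIn : Finset ℕ)
    (hprimePr : ∀ p ∈ PrIn, p.Prime)
    (hupPr : ∀ p ∈ PrIn, p ≤ r^r)
    (hlowPr : ∀ p ∈ PrIn, ((r^r:ℕ):ℝ)^δ ≤ (p:ℝ))
    (hk2 : 2*(r+s) ≤ PrIn.card)
    (hnum : C * (PrIn.card.choose r : ℝ)
        * Real.exp (-(c*Real.sqrt ((δ*((r:ℝ)*((r:ℝ)*Real.log r)))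
            * Real.log (δ*((r:ℝ)*((r:ℝ)*Real.log r)))))) * (PrIn.card.choose s : ℝ)
      < (PrIn.card.choose (r+s) : ℝ) *
        ((((r+s).choose r : ℝ) * (((r:ℝ)^r)^r)^(-(1/2):ℝ)
            * (δ*(r:ℝ)*((r:ℝ)*Real.log r)))^2 / (((r+s:ℕ):ℝ)*((r:ℝ)*Real.log r))^2))
    (hlogy2 : 2*Real.log r ≤ Real.log (δ*((r:ℝ)*((r:ℝ)*Real.log r)))) :
    ∃ b a : ℕ → ℂ,
      (Function.support b).Finite ∧ (∀ n, b n ≠ 0 → 2 ≤ n) ∧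
      (Function.support a).Finite ∧ (∃ n, 1 ≤ n ∧ a n ≠ 0) ∧
      ENNReal.ofReal C *
          (∑' n : ℕ, (if 2 ≤ n then
              ENNReal.ofReal
                (‖b n‖ ^ 2 * n * Real.exp (-(c * Real.sqrt (Real.log n * loglog n))))
            else 0)) *
          (∑' n : ℕ, (if 1 ≤ n then ENNReal.ofReal (‖a n‖ ^ 2) else 0))
        < ∑' N : ℕ, (if 2 ≤ N then
            ENNReal.ofReal
              (‖∑ d ∈ N.divisors.filter (fun d => 2 ≤ d),
                  b d * (Real.log d : ℂ) * a (N / d)‖ ^ 2 / Real.log N ^ 2)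
          else 0) := by
  classical
  have hr1 : (1:ℝ) ≤ (r:ℝ) := by exact_mod_cast (by omega : 1 ≤ r)
  have hr0 : (0:ℝ) < (r:ℝ) := by linarith
  set Pn : ℕ := r^r with hPn
  set w : ℝ := (r:ℝ)*Real.log r with hw
  have hw0 : 0 < w := by rw [hw]; nlinarith
  have hPRcast : ((Pn:ℕ):ℝ) = (r:ℝ)^r := by rw [hPn]; push_cast; ring
  have hPR0 : (0:ℝ) < ((Pn:ℕ):ℝ) := by rw [hPRcast]; positivity
  have hlogPR : Real.log ((Pn:ℕ):ℝ) = w := by rw [hPRcast, Real.log_pow, hw]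
  set Q : ℝ := ((Pn:ℕ):ℝ)^(δ:ℝ) with hQ
  have hlogQ : Real.log Q = δ*w := by rw [hQ, Real.log_rpow hPR0, hlogPR]
  have hQ1 : 1 ≤ Q := by
    rw [hQ]
    apply Real.one_le_rpow _ (le_of_lt hδ0)
    rw [hPRcast]
    calc (1:ℝ) = 1^r := (one_pow r).symm
      _ ≤ (r:ℝ)^r := pow_le_pow_left₀ (by norm_num) hr1 r
  set kk : ℕ := PrIn.card with hkk
  set y : ℝ := δ*((r:ℝ)*w) with hy
  have hy0 : 0 < y := by rw [hy]; positivity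
  have hlogy0 : (0:ℝ) ≤ Real.log y := by linarith
  set E : ℝ := Real.exp (-(c*Real.sqrt (y*Real.log y))) with hE
  -- the sets
  set Dr : Finset ℕ := (PrIn.powersetCard r).image (fun S => ∏ p ∈ S, p) with hDr
  set Ds : Finset ℕ := (PrIn.powersetCard s).image (fun S => ∏ p ∈ S, p) with hDs
  set Dt : Finset ℕ := (PrIn.powersetCard (r+s)).image (fun S => ∏ p ∈ S, p) with hDt
  -- generic member facts
  have hmem : ∀ (j n : ℕ), n ∈ (PrIn.powersetCard j).image (fun S => ∏ p ∈ S, p) →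
      0 < n ∧ (1 ≤ j → 2 ≤ n) ∧ ((j:ℝ)*(δ*w) ≤ Real.log n) ∧ Real.log n ≤ (j:ℝ)*w := by
    intro j n hn
    rw [Finset.mem_image] at hn
    obtain ⟨S, hS, rfl⟩ := hn
    rw [Finset.mem_powersetCard] at hS
    obtain ⟨hSsub, hScard⟩ := hS
    have hprimeS : ∀ p ∈ S, p.Prime := fun p hp => hprimePr p (hSsub hp)
    have hpos : 0 < ∏ p ∈ S, p := Finset.prod_pos (fun p hp => (hprimeS p hp).pos)
    refine ⟨hpos, ?_, ?_, ?_⟩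
    · intro hj
      obtain ⟨p, hp⟩ := Finset.card_pos.mp (by omega : 0 < S.card)
      have : p ∣ ∏ q ∈ S, q := Finset.dvd_prod_of_mem _ hp
      calc 2 ≤ p := (hprimeS p hp).two_le
        _ ≤ ∏ q ∈ S, q := Nat.le_of_dvd hpos this
    · have hQS : Q^j ≤ ((∏ p ∈ S, p : ℕ):ℝ) := by
        have h1 : ∏ _p ∈ S, Q ≤ ∏ p ∈ S, (p:ℝ) :=
          Finset.prod_le_prod (fun _ _ => by linarith) (fun p hp => hlowPr p (hSsub hp))
        rw [Finset.prod_const, hScard] at h1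
        calc Q^j ≤ ∏ p ∈ S, (p:ℝ) := h1
          _ = ((∏ p ∈ S, p : ℕ):ℝ) := by push_cast; ring
      have h2 : Real.log (Q^j) ≤ Real.log ((∏ p ∈ S, p : ℕ):ℝ) :=
        Real.log_le_log (pow_pos (by linarith) j) hQS
      rw [Real.log_pow, hlogQ] at h2
      exact h2
    · have hub : ((∏ p ∈ S, p : ℕ):ℝ) ≤ ((Pn:ℕ):ℝ)^j := by
        have h1 : (∏ p ∈ S, p) ≤ Pn^S.card :=
          Finset.prod_le_pow_card S _ Pn (fun p hp => hupPr p (hSsub hp))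
        rw [hScard] at h1
        exact_mod_cast h1
      have h2 : Real.log ((∏ p ∈ S, p : ℕ):ℝ) ≤ Real.log (((Pn:ℕ):ℝ)^j) :=
        Real.log_le_log (by exact_mod_cast hpos) hub
      rw [Real.log_pow, hlogPR] at h2
      exact h2
  -- cardinalities
  have hcard : ∀ j : ℕ, ((PrIn.powersetCard j).image (fun S => ∏ p ∈ S, p)).card = kk.choose j := by
    intro j
    rw [Finset.card_image_of_injOn (prodset_injOn' PrIn hprimePr j), Finset.card_powersetCard]
  -- the sequences
  set b : ℕ → ℂ := fun n => (((if n ∈ Dr then ((n:ℝ))^(-(1/2):ℝ) else 0 : ℝ) : ℂ)) with hb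
  set a : ℕ → ℂ := fun n => (((if n ∈ Ds then (1:ℝ) else 0 : ℝ) : ℂ)) with ha
  have hbsupp : ∀ n, b n ≠ 0 → n ∈ Dr := by
    intro n hn
    by_contra h
    apply hn
    rw [hb]; simp [h]
  have hasupp : ∀ n, a n ≠ 0 → n ∈ Ds := by
    intro n hn
    by_contra h
    apply hn
    rw [ha]; simp [h]
  refine ⟨b, a, ?_, ?_, ?_, ?_, ?_⟩
  · exact Set.Finite.subset Dr.finite_toSet (fun n hn => hbsupp n hn)
  · intro n hn
    exact ((hmem r n (hbsupp n hn)).2.1 (by omega))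
  · exact Set.Finite.subset Ds.finite_toSet (fun n hn => hasupp n hn)
  · -- a not identically zero
    have hne : Ds.Nonempty := by
      rw [hDs]
      apply Finset.Nonempty.image
      rw [Finset.powersetCard_nonempty]
      omega
    obtain ⟨n, hn⟩ := hne
    refine ⟨n, (hmem s n hn).1, ?_⟩
    rw [ha]
    simp [hn]
  -- the inequality
  -- Part 1: bound the b-weight sum
  have hbZero : ∀ n ∉ Dr, (if 2 ≤ n then
      ENNReal.ofReal (‖b n‖ ^ 2 * n * Real.exp (-(c * Real.sqrt (Real.log n * loglog n))))
      else 0) = 0 := by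
    intro n hn
    have hbn : b n = 0 := by rw [hb]; simp [hn]
    split
    · rw [hbn]; simp
    · rfl
  have hSb : (∑' n : ℕ, (if 2 ≤ n then
      ENNReal.ofReal (‖b n‖ ^ 2 * n * Real.exp (-(c * Real.sqrt (Real.log n * loglog n))))
      else 0)) ≤ (kk.choose r : ℝ≥0∞) * ENNReal.ofReal E := by
    rw [tsum_eq_sum hbZero]
    have hterm : ∀ n ∈ Dr, (if 2 ≤ n then
        ENNReal.ofReal (‖b n‖ ^ 2 * n * Real.exp (-(c * Real.sqrt (Real.log n * loglog n))))
        else 0) ≤ ENNReal.ofReal E := by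
      intro n hn
      obtain ⟨hn0, hn2, hnlow, _⟩ := hmem r n hn
      rw [if_pos (hn2 (by omega))]
      apply ENNReal.ofReal_le_ofReal
      have hbn : b n = (((n:ℝ)^(-(1/2):ℝ) : ℝ) : ℂ) := by rw [hb]; simp [hn]
      have hnR : (0:ℝ) < (n:ℝ) := by exact_mod_cast hn0
      have hnorm : ‖b n‖ = (n:ℝ)^(-(1/2):ℝ) := by
        rw [hbn, Complex.norm_real, Real.norm_of_nonneg (Real.rpow_nonneg (le_of_lt hnR) _)]
      have hone : ‖b n‖^2 * (n:ℝ) = 1 := by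
        rw [hnorm, ← Real.rpow_natCast ((n:ℝ)^(-(1/2):ℝ)) 2, ← Real.rpow_mul (le_of_lt hnR)]
        norm_num
        rw [Real.rpow_neg_one]
        field_simp
      rw [hone, one_mul, hE]
      apply Real.exp_le_exp.mpr
      apply neg_le_neg
      apply mul_le_mul_of_nonneg_left _ (le_of_lt hc0)
      apply Real.sqrt_le_sqrt
      have hylog : y ≤ Real.log n := by
        have := hnlow
        rw [hy]; linarith [this]
      have hll : Real.log y ≤ loglog n := by
        unfold loglog
        exact le_max_of_le_right (Real.log_le_log hy0 hylog)
      exact mul_le_mul hylog hll hlogy0 (by linarith)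
    calc ∑ n ∈ Dr, (if 2 ≤ n then
        ENNReal.ofReal (‖b n‖ ^ 2 * n * Real.exp (-(c * Real.sqrt (Real.log n * loglog n))))
        else 0) ≤ ∑ _n ∈ Dr, ENNReal.ofReal E := Finset.sum_le_sum hterm
      _ = (Dr.card : ℝ≥0∞) * ENNReal.ofReal E := by rw [Finset.sum_const, nsmul_eq_mul]
      _ = (kk.choose r : ℝ≥0∞) * ENNReal.ofReal E := by rw [hDr, hcard r]
  -- Part 2: the a-sum
  have haZero : ∀ n ∉ Ds, (if 1 ≤ n then ENNReal.ofReal (‖a n‖ ^ 2) else 0) = 0 := by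
    intro n hn
    have han : a n = 0 := by rw [ha]; simp [hn]
    split
    · rw [han]; simp
    · rfl
  have hSa : (∑' n : ℕ, (if 1 ≤ n then ENNReal.ofReal (‖a n‖ ^ 2) else 0))
      ≤ (kk.choose s : ℝ≥0∞) := by
    rw [tsum_eq_sum haZero]
    have hterm : ∀ n ∈ Ds, (if 1 ≤ n then ENNReal.ofReal (‖a n‖ ^ 2) else 0) ≤ 1 := by
      intro n hn
      have h1 : 1 ≤ n := (hmem s n hn).1
      have han : a n = ((1:ℝ):ℂ) := by rw [ha]; simp [hn]
      rw [if_pos h1, han]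
      simp
    calc ∑ n ∈ Ds, (if 1 ≤ n then ENNReal.ofReal (‖a n‖ ^ 2) else 0)
        ≤ ∑ _n ∈ Ds, 1 := Finset.sum_le_sum hterm
      _ = (Ds.card : ℝ≥0∞) := by rw [Finset.sum_const, nsmul_eq_mul, mul_one]
      _ = (kk.choose s : ℝ≥0∞) := by rw [hDs, hcard s]
  -- Part 3: the RHS lower bound
  set Z : ℝ := ((((r+s).choose r : ℝ) * (((r:ℝ)^r)^r)^(-(1/2):ℝ)
      * (δ*(r:ℝ)*w))^2 / (((r+s:ℕ):ℝ)*w)^2) with hZ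
  have htcr0 : (0:ℝ) < ((r+s).choose r : ℝ) := by
    exact_mod_cast Nat.choose_pos (by omega : r ≤ r + s)
  have hZ0 : 0 < Z := by
    rw [hZ]
    apply div_pos
    · apply pow_pos
      apply mul_pos (mul_pos htcr0 _)
      · rw [hw]; positivity
      · apply Real.rpow_pos_of_pos; positivity
    · apply pow_pos
      apply mul_pos _ hw0
      have : 0 < r + s := by omega
      exact_mod_cast this
  have hRHSge : (kk.choose (r+s) : ℝ≥0∞) * ENNReal.ofReal Z
      ≤ ∑' N : ℕ, (if 2 ≤ N then
          ENNReal.ofReal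
            (‖∑ d ∈ N.divisors.filter (fun d => 2 ≤ d),
                b d * (Real.log d : ℂ) * a (N / d)‖ ^ 2 / Real.log N ^ 2)
        else 0) := by
    have hterm : ∀ N ∈ Dt, ENNReal.ofReal Z ≤ (if 2 ≤ N then
        ENNReal.ofReal
          (‖∑ d ∈ N.divisors.filter (fun d => 2 ≤ d),
              b d * (Real.log d : ℂ) * a (N / d)‖ ^ 2 / Real.log N ^ 2)
        else 0) := by
      intro N hN
      obtain ⟨hN0, hN2', _, hNup⟩ := hmem (r+s) N hN
      have hN2 : 2 ≤ N := hN2' (by omega)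
      rw [if_pos hN2]
      apply ENNReal.ofReal_le_ofReal
      -- get the representing set T
      have hN' := hN
      rw [hDt, Finset.mem_image] at hN'
      obtain ⟨T, hT, hNT⟩ := hN'
      rw [Finset.mem_powersetCard] at hT
      -- sigma lower bound
      have hσ := sigma_lower PrIn hprimePr r s (by omega) T hT.1 hT.2 Pn hupPr Q hQ1
        (fun p hp => hlowPr p hp) Dr Ds hDr hDs
      rw [hNT] at hσ
      -- identify the complex sum with the real sum
      have hterm_eq : ∀ d ∈ N.divisors.filter (fun d => 2 ≤ d),
          b d * (Real.log d : ℂ) * a (N / d)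
            = (((if d ∈ Dr then ((d:ℝ))^(-(1/2):ℝ) else 0) * Real.log (d:ℝ)
                * (if N/d ∈ Ds then (1:ℝ) else 0) : ℝ) : ℂ) := by
        intro d _
        rw [hb, ha]
        push_cast
        ring
      have hsum_eq : (∑ d ∈ N.divisors.filter (fun d => 2 ≤ d),
          b d * (Real.log d : ℂ) * a (N / d))
            = (((∑ d ∈ N.divisors.filter (fun d => 2 ≤ d),
              (if d ∈ Dr then ((d:ℝ))^(-(1/2):ℝ) else 0) * Real.log (d:ℝ)
                * (if N/d ∈ Ds then (1:ℝ) else 0)) : ℝ) : ℂ) := by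
        rw [Finset.sum_congr rfl hterm_eq]
        push_cast
        ring
      set B : ℝ := ((r+s).choose r : ℝ) * ((((Pn:ℕ):ℝ)^r)^(-(1/2):ℝ) * ((r:ℝ)*Real.log Q))
        with hB
      have hBB : B = ((r+s).choose r : ℝ) * (((r:ℝ)^r)^r)^(-(1/2):ℝ) * (δ*(r:ℝ)*w) := by
        rw [hB, hlogQ, hPRcast]
        ring
      have hB0 : 0 ≤ B := by
        rw [hBB]
        apply mul_nonneg (mul_nonneg (le_of_lt htcr0) (Real.rpow_nonneg (by positivity) _))
        rw [hw]; positivity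
      have hnormge : B ≤ ‖∑ d ∈ N.divisors.filter (fun d => 2 ≤ d),
          b d * (Real.log d : ℂ) * a (N / d)‖ := by
        rw [hsum_eq, Complex.norm_real]
        calc B ≤ ∑ d ∈ N.divisors.filter (fun d => 2 ≤ d),
              (if d ∈ Dr then ((d:ℝ))^(-(1/2):ℝ) else 0) * Real.log (d:ℝ)
                * (if N/d ∈ Ds then (1:ℝ) else 0) := hσ
          _ ≤ ‖∑ d ∈ N.divisors.filter (fun d => 2 ≤ d),
              (if d ∈ Dr then ((d:ℝ))^(-(1/2):ℝ) else 0) * Real.log (d:ℝ)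
                * (if N/d ∈ Ds then (1:ℝ) else 0)‖ := le_abs_self _
      have hlogN0 : 0 < Real.log N := Real.log_pos (by exact_mod_cast hN2)
      have hlogNup : Real.log N ≤ ((r+s:ℕ):ℝ)*w := by
        have := hNup; push_cast at this ⊢; linarith
      rw [hZ, ← hBB]
      apply div_le_div₀ (by positivity) _ (by positivity) _
      · apply pow_le_pow_left₀ hB0 hnormge
      · apply pow_le_pow_left₀ (le_of_lt hlogN0) hlogNup
    calc (kk.choose (r+s) : ℝ≥0∞) * ENNReal.ofReal Z
        = (Dt.card : ℝ≥0∞) * ENNReal.ofReal Z := by rw [hDt, hcard (r+s)]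
      _ = ∑ _N ∈ Dt, ENNReal.ofReal Z := by rw [Finset.sum_const, nsmul_eq_mul]
      _ ≤ ∑ N ∈ Dt, (if 2 ≤ N then
          ENNReal.ofReal
            (‖∑ d ∈ N.divisors.filter (fun d => 2 ≤ d),
                b d * (Real.log d : ℂ) * a (N / d)‖ ^ 2 / Real.log N ^ 2)
          else 0) := Finset.sum_le_sum hterm
      _ ≤ _ := ENNReal.sum_le_tsum Dt
  -- Part 4: combine
  calc ENNReal.ofReal C *
        (∑' n : ℕ, (if 2 ≤ n then
            ENNReal.ofReal
              (‖b n‖ ^ 2 * n * Real.exp (-(c * Real.sqrt (Real.log n * loglog n))))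
          else 0)) *
        (∑' n : ℕ, (if 1 ≤ n then ENNReal.ofReal (‖a n‖ ^ 2) else 0))
      ≤ ENNReal.ofReal C * ((kk.choose r : ℝ≥0∞) * ENNReal.ofReal E) * (kk.choose s : ℝ≥0∞) := by
        exact mul_le_mul' (mul_le_mul' (le_refl _) hSb) hSa
    _ = ENNReal.ofReal (C * (kk.choose r : ℝ) * E * (kk.choose s : ℝ)) := by
        rw [ENNReal.ofReal_mul (by positivity), ENNReal.ofReal_mul (by positivity),
          ENNReal.ofReal_mul (le_of_lt hC), ENNReal.ofReal_natCast, ENNReal.ofReal_natCast]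
        ring
    _ < ENNReal.ofReal ((kk.choose (r+s) : ℝ) * Z) := by
        rw [ENNReal.ofReal_lt_ofReal_iff]
        · rw [hZ]
          exact hnum
        · apply mul_pos _ hZ0
          have : 0 < kk.choose (r+s) := Nat.choose_pos (by omega)
          exact_mod_cast this
    _ = (kk.choose (r+s) : ℝ≥0∞) * ENNReal.ofReal Z := by
        rw [ENNReal.ofReal_mul (by positivity), ENNReal.ofReal_natCast]
    _ ≤ _ := hRHSge


set_option maxHeartbeats 2000000 in
/-- for `c > 2√2` the inequality
`‖T_g f‖² ≤ C (∑_{n≥2} |b_n|² n e^{-c√(log n log₂ n)}) ‖f‖²` cannot hold for all symbols: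
for every `C > 0` there are finitely supported `b` (supported on `n ≥ 2`) and `a`
(not identically zero) violating it. -/
theorem volterra_general_weight_sharp (c : ℝ) (hc : 2 * Real.sqrt 2 < c)
    (C : ℝ) (hC : 0 < C) :
    ∃ b a : ℕ → ℂ,
      (Function.support b).Finite ∧ (∀ n, b n ≠ 0 → 2 ≤ n) ∧
      (Function.support a).Finite ∧ (∃ n, 1 ≤ n ∧ a n ≠ 0) ∧
      ENNReal.ofReal C *
          (∑' n : ℕ, (if 2 ≤ n then
              ENNReal.ofReal
                (‖b n‖ ^ 2 * n * Real.exp (-(c * Real.sqrt (Real.log n * loglog n))))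
            else 0)) *
          (∑' n : ℕ, (if 1 ≤ n then ENNReal.ofReal (‖a n‖ ^ 2) else 0))
        < ∑' N : ℕ, (if 2 ≤ N then
            ENNReal.ofReal
              (‖∑ d ∈ N.divisors.filter (fun d => 2 ≤ d),
                  b d * (Real.log d : ℂ) * a (N / d)‖ ^ 2 / Real.log N ^ 2)
          else 0) := by
  classical
  have hs2 : (0:ℝ) < Real.sqrt 2 := Real.sqrt_pos.mpr (by norm_num)
  have hc0 : 0 < c := lt_trans (by positivity) hc
  have hc2 : 8 < c^2 := by
    have h8 : (2*Real.sqrt 2)^2 = 8 := by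
      rw [mul_pow, Real.sq_sqrt (by norm_num : (0:ℝ) ≤ 2)]; norm_num
    nlinarith
  have hc2pos : (0:ℝ) < c^2 := by positivity
  obtain ⟨δ, hδdef⟩ : ∃ δ : ℝ, δ = (8/c^2 + 1)/2 := ⟨_, rfl⟩
  have hδ0 : 0 < δ := by rw [hδdef]; positivity
  have h8c : 8/c^2 < 1 := (div_lt_one hc2pos).mpr hc2
  have hδ1 : δ < 1 := by rw [hδdef]; linarith
  have hδgt : 8/c^2 < δ := by rw [hδdef]; linarith
  have hμ : 0 < c*Real.sqrt (2*δ) - 4 := by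
    have h1 : (4/c)^2 < 2*δ := by
      have e : (4/c)^2 = 2*(8/c^2) := by field_simp; ring
      rw [e]; linarith
    have h2 : 4/c < Real.sqrt (2*δ) := (Real.lt_sqrt (by positivity)).mpr h1
    have h3 := mul_lt_mul_of_pos_left h2 hc0
    have h4 : c * (4/c) = 4 := by field_simp
    linarith
  obtain ⟨μ, hμdef⟩ : ∃ μ : ℝ, μ = c*Real.sqrt (2*δ) - 4 := ⟨_, rfl⟩
  rw [← hμdef] at hμ
  -- tendsto facts
  have hlogT : Tendsto (fun r : ℕ => Real.log r) atTop atTop :=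
    Real.tendsto_log_atTop.comp tendsto_natCast_atTop_atTop
  have hwT : Tendsto (fun r : ℕ => (r:ℝ)*Real.log r) atTop atTop :=
    Tendsto.atTop_mul_atTop₀ tendsto_natCast_atTop_atTop hlogT
  have hPT : Tendsto (fun r : ℕ => r^r) atTop atTop := by
    apply tendsto_atTop_mono _ tendsto_id
    intro r
    match r with
    | 0 => simp
    | (n+1) => exact Nat.le_self_pow (by omega) _
  -- eventual facts
  have evlog : ∀ᶠ r : ℕ in atTop, 2 ≤ Real.log r ∧ 1/δ ≤ Real.log r := by
    filter_upwards [hlogT.eventually_ge_atTop 2, hlogT.eventually_ge_atTop (1/δ)] with r h1 h2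
    exact ⟨h1, h2⟩
  have evC1 : ∀ᶠ r : ℕ in atTop,
      8*((r:ℝ)*Real.log r) ≤ Real.exp ((1-δ)*((r:ℝ)*Real.log r)) := by
    have hev : ∀ᶠ w : ℝ in atTop, 8*w ≤ Real.exp ((1-δ)*w) := by
      filter_upwards [eventually_ge_atTop (1:ℝ),
        eventually_ge_atTop (216/(1-δ)^3)] with w hw1 hwK
      have hw0 : 0 ≤ w := by linarith
      have hcube := cube_div_le_exp ((1-δ)*w) (by nlinarith)
      have h1δ : 0 < 1 - δ := by linarith
      have : 8*w ≤ ((1-δ)*w)^3/27 := by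
        have hw2 : 216/(1-δ)^3 * 1 ≤ w * w := by nlinarith
        have : 216/(1-δ)^3 ≤ w^2 := by nlinarith
        have h3 : 216 ≤ (1-δ)^3 * w^2 := by
          rw [div_le_iff₀ (by positivity)] at this
          linarith [this]
        nlinarith [pow_pos h1δ 3, sq_nonneg w, mul_pos (pow_pos h1δ 3) (mul_pos (lt_of_lt_of_le one_pos hw1) (lt_of_lt_of_le one_pos hw1))]
      linarith
    exact hwT.eventually hev
  have evC2 : ∀ᶠ r : ℕ in atTop,
      (4*((r:ℝ)*Real.log r))*(2*(r:ℝ)+1) ≤ Real.exp ((r:ℝ)*Real.log r) := by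
    filter_upwards [evlog, eventually_ge_atTop (56:ℕ)] with r hlog hr56
    have hr0 : (56:ℝ) ≤ (r:ℝ) := by exact_mod_cast hr56
    set w := (r:ℝ)*Real.log r with hw
    have hl2 := hlog.1
    have hw2r : 2*(r:ℝ) ≤ w := by rw [hw]; nlinarith
    have hw0 : 0 ≤ w := by nlinarith
    have hcube := cube_div_le_exp w hw0
    have h4r : 216*(r:ℝ)+108 ≤ (2*(r:ℝ))*(2*(r:ℝ)) := by nlinarith
    have hww : (2*(r:ℝ))*(2*(r:ℝ)) ≤ w*w := mul_le_mul hw2r hw2r (by positivity) hw0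
    have hwsq : 216*(r:ℝ)+108 ≤ w*w := le_trans h4r hww
    have hw3 : (216*(r:ℝ)+108)*w ≤ w^3 := by
      have hp3 : w^3 = (w*w)*w := by ring
      rw [hp3]
      exact mul_le_mul_of_nonneg_right hwsq hw0
    have hfin : (4*w)*(2*(r:ℝ)+1) ≤ w^3/27 := by linarith
    exact le_trans hfin hcube
  have evP32 : ∀ᶠ r : ℕ in atTop, 32*((r:ℝ)*Real.log r) ≤ Real.exp ((r:ℝ)*Real.log r) := by
    have hev : ∀ᶠ w : ℝ in atTop, 32*w ≤ Real.exp w := by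
      filter_upwards [eventually_ge_atTop (30:ℝ)] with w hw
      have hcube := cube_div_le_exp w (by linarith)
      have h900 : (30:ℝ)*30 ≤ w*w := mul_le_mul hw hw (by norm_num) (by linarith)
      have hw3 : (30*30)*w ≤ w^3 := by
        have hp3 : w^3 = (w*w)*w := by ring
        rw [hp3]
        exact mul_le_mul_of_nonneg_right h900 (by linarith)
      linarith
    exact hwT.eventually hev
  have evll : ∀ᶠ r : ℕ in atTop, Real.log (Real.log r) ≤ (μ/2)*Real.log r := by
    have hev : ∀ᶠ x : ℝ in atTop, Real.log x ≤ (μ/2)*x := by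
      have h1 : (fun x:ℝ => Real.log x) =o[atTop] (fun x:ℝ => x) := Real.isLittleO_log_id_atTop
      filter_upwards [h1.bound (by positivity : (0:ℝ) < μ/2), eventually_ge_atTop (1:ℝ)]
        with x hx hx1
      calc Real.log x ≤ ‖Real.log x‖ := le_abs_self _
        _ ≤ (μ/2) * ‖x‖ := hx
        _ = (μ/2) * x := by rw [Real.norm_of_nonneg (by linarith)]
    exact hlogT.eventually hev
  have ev64 : ∀ᶠ r : ℕ in atTop, Real.log 64 + 1 ≤ (μ/2)*Real.log r := by
    filter_upwards [hlogT.eventually_ge_atTop ((Real.log 64 + 1)*(2/μ))] with r h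
    have h1 : (μ/2) * ((Real.log 64 + 1)*(2/μ)) = Real.log 64 + 1 := by field_simp
    have h2 := mul_le_mul_of_nonneg_left h (by positivity : (0:ℝ) ≤ μ/2)
    linarith
  have evr : ∀ᶠ r : ℕ in atTop,
      Real.log C - 2*Real.log δ + 2*Real.log 2 + 1 ≤ (r:ℝ) :=
    tendsto_natCast_atTop_atTop.eventually_ge_atTop _
  have evCheb : ∀ᶠ r : ℕ in atTop,
      ((r^r : ℕ):ℝ)/(2*Real.log ((r^r:ℕ):ℝ))
        ≤ (((Finset.range (r^r+1)).filter Nat.Prime).card : ℝ) :=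
    hPT.eventually chebyshev_lower'
  -- combine
  have evAll := ((eventually_ge_atTop 3).and (evlog.and (evC1.and (evC2.and (evP32.and
      (evll.and (ev64.and (evr.and evCheb))))))))
  obtain ⟨r, hr3, ⟨hlog2, hlogδ⟩, hC1, hC2, hP32, hll, h64, hrC, hCheb⟩ := evAll.exists
  have hr1 : (1:ℝ) ≤ (r:ℝ) := by exact_mod_cast (by omega : 1 ≤ r)
  have hr0 : (0:ℝ) < (r:ℝ) := by linarith
  set Pn : ℕ := r^r with hPn
  set w : ℝ := (r:ℝ)*Real.log r with hw
  have hw0 : 0 < w := by rw [hw]; nlinarith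
  have hw2 : 2*(r:ℝ) ≤ w := by rw [hw]; nlinarith
  have hPRcast : ((Pn:ℕ):ℝ) = (r:ℝ)^r := by rw [hPn]; push_cast; ring
  have hPR0 : (0:ℝ) < ((Pn:ℕ):ℝ) := by rw [hPRcast]; positivity
  have hlogPR : Real.log ((Pn:ℕ):ℝ) = w := by rw [hPRcast, Real.log_pow, hw]
  have hPRexp : ((Pn:ℕ):ℝ) = Real.exp w := by rw [← hlogPR, Real.exp_log hPR0]
  set Q : ℝ := ((Pn:ℕ):ℝ)^(δ:ℝ) with hQ
  have hQ0 : 0 < Q := Real.rpow_pos_of_pos hPR0 δ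
  have hQexp : Q = Real.exp (δ*w) := by
    rw [hQ, Real.rpow_def_of_pos hPR0, hlogPR, mul_comm]
  set s : ℕ := ⌊((Pn:ℕ):ℝ)/(16*w)⌋₊ with hs
  set PrIn : Finset ℕ := (Finset.range (Pn+1)).filter (fun p => Nat.Prime p ∧ ⌊Q⌋₊ < p)
    with hPrIn
  set kk : ℕ := PrIn.card with hkk
  -- basic membership facts
  have hprimePr : ∀ p ∈ PrIn, p.Prime := by
    intro p hp; rw [hPrIn, Finset.mem_filter] at hp; exact hp.2.1
  have hupPr : ∀ p ∈ PrIn, p ≤ Pn := by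
    intro p hp; rw [hPrIn, Finset.mem_filter, Finset.mem_range] at hp; omega
  have hlowPr : ∀ p ∈ PrIn, Q ≤ (p:ℝ) := by
    intro p hp; rw [hPrIn, Finset.mem_filter] at hp
    have := (Nat.floor_lt (le_of_lt hQ0)).mp hp.2.2
    linarith
  -- s bounds
  have hPn32 : 32*w ≤ ((Pn:ℕ):ℝ) := by rw [hPRexp]; exact hP32
  have hs_ub : (s:ℝ) ≤ ((Pn:ℕ):ℝ)/(16*w) := Nat.floor_le (by positivity)
  have hs1' : 1 ≤ s := by
    rw [hs]
    apply Nat.le_floor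
    rw [le_div_iff₀ (by positivity)]
    push_cast
    linarith
  have hs_lb : ((Pn:ℕ):ℝ)/(32*w) ≤ (s:ℝ) := by
    have h1 : ((Pn:ℕ):ℝ)/(16*w) < (s:ℝ) + 1 := Nat.lt_floor_add_one _
    have h2 : (1:ℝ) ≤ ((Pn:ℕ):ℝ)/(32*w) := by
      rw [le_div_iff₀ (by positivity)]
      linarith
    have h3 : ((Pn:ℕ):ℝ)/(16*w) = ((Pn:ℕ):ℝ)/(32*w) + ((Pn:ℕ):ℝ)/(32*w) := by ring
    linarith
  have hsub : (s:ℝ) ≤ (r:ℝ)^r := by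
    rw [← hPRcast]
    calc (s:ℝ) ≤ ((Pn:ℕ):ℝ)/(16*w) := hs_ub
      _ ≤ ((Pn:ℕ):ℝ)/1 := by
          apply div_le_div_of_nonneg_left (le_of_lt hPR0) (by norm_num) (by linarith)
      _ = ((Pn:ℕ):ℝ) := by rw [div_one]
  -- the prime count bound
  have hk2 : 2*(r+s) ≤ kk := by
    have hsubset : (Finset.range (Pn+1)).filter Nat.Prime ⊆ PrIn ∪ Finset.range (⌊Q⌋₊+1) := by
      intro p hp
      rw [Finset.mem_filter, Finset.mem_range] at hp
      by_cases hc : ⌊Q⌋₊ < p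
      · apply Finset.mem_union_left
        rw [hPrIn, Finset.mem_filter, Finset.mem_range]
        exact ⟨hp.1, hp.2, hc⟩
      · apply Finset.mem_union_right
        rw [Finset.mem_range]; omega
    have hπle : ((Finset.range (Pn+1)).filter Nat.Prime).card ≤ kk + (⌊Q⌋₊+1) := by
      calc ((Finset.range (Pn+1)).filter Nat.Prime).card
          ≤ (PrIn ∪ Finset.range (⌊Q⌋₊+1)).card := Finset.card_le_card hsubset
        _ ≤ PrIn.card + (Finset.range (⌊Q⌋₊+1)).card := Finset.card_union_le _ _
        _ = kk + (⌊Q⌋₊+1) := by rw [hkk, Finset.card_range]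
    have hπge : ((Pn:ℕ):ℝ)/(2*w) ≤ (((Finset.range (Pn+1)).filter Nat.Prime).card : ℝ) := by
      have h := hCheb
      rwa [hlogPR] at h
    have hfloorQ : (⌊Q⌋₊:ℝ) ≤ Q := Nat.floor_le (le_of_lt hQ0)
    have hQ8 : Q ≤ ((Pn:ℕ):ℝ)/(8*w) := by
      rw [le_div_iff₀ (by positivity), hQexp, hPRexp]
      calc Real.exp (δ*w) * (8*w) = 8*w * Real.exp (δ*w) := by ring
        _ ≤ Real.exp ((1-δ)*w) * Real.exp (δ*w) := by
            have h8w : 8*w ≤ Real.exp ((1-δ)*w) := hC1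
            apply mul_le_mul_of_nonneg_right h8w (le_of_lt (Real.exp_pos _))
        _ = Real.exp w := by rw [← Real.exp_add]; ring_nf
    have h2r : 2*(r:ℝ)+1 ≤ ((Pn:ℕ):ℝ)/(4*w) := by
      rw [le_div_iff₀ (by positivity), hPRexp]
      calc (2*(r:ℝ)+1) * (4*w) = (4*w)*(2*(r:ℝ)+1) := by ring
        _ ≤ Real.exp w := hC2
    have hcast : ((2*(r+s) + (⌊Q⌋₊+1) : ℕ):ℝ)
        ≤ (((Finset.range (Pn+1)).filter Nat.Prime).card : ℝ) := by
      push_cast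
      have e1 : 2*(s:ℝ) ≤ ((Pn:ℕ):ℝ)/(8*w) := by
        have : ((Pn:ℕ):ℝ)/(8*w) = 2*(((Pn:ℕ):ℝ)/(16*w)) := by ring
        rw [this]; linarith
      have efin : ((Pn:ℕ):ℝ)/(4*w) + ((Pn:ℕ):ℝ)/(8*w) + ((Pn:ℕ):ℝ)/(8*w)
          = ((Pn:ℕ):ℝ)/(2*w) := by ring
      linarith
    have hnat : 2*(r+s) + (⌊Q⌋₊+1) ≤ ((Finset.range (Pn+1)).filter Nat.Prime).card := by
      exact_mod_cast hcast
    omega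
  -- hsP in the right form
  have hsP : ((r:ℝ)^r)/(32*((r:ℝ)*Real.log r)) ≤ (s:ℝ) := by
    rw [← hPRcast, ← hw]
    exact hs_lb
  -- hlogy
  have hlogy2 : 2*Real.log r ≤ Real.log (δ*((r:ℝ)*((r:ℝ)*Real.log r))) := by
    have h1 : (r:ℝ)^2 ≤ δ*((r:ℝ)*((r:ℝ)*Real.log r)) := by
      have h2 : 1 ≤ δ*Real.log r := by
        have h4 := mul_le_mul_of_nonneg_left hlogδ (le_of_lt hδ0)
        have h3 : δ*(1/δ) = 1 := by field_simp
        linarith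
      have h5 : (r:ℝ)*(r:ℝ)*1 ≤ (r:ℝ)*(r:ℝ)*(δ*Real.log r) :=
        mul_le_mul_of_nonneg_left h2 (by positivity)
      have h6 : δ*((r:ℝ)*((r:ℝ)*Real.log r)) = (r:ℝ)*(r:ℝ)*(δ*Real.log r) := by ring
      have h7 : (r:ℝ)^2 = (r:ℝ)*(r:ℝ)*1 := by ring
      linarith
    calc 2*Real.log r = Real.log ((r:ℝ)^2) := by rw [Real.log_pow]; push_cast; ring
      _ ≤ Real.log (δ*((r:ℝ)*((r:ℝ)*Real.log r))) := Real.log_le_log (by positivity) h1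
  -- hE
  have hEE : Real.log C < (c*Real.sqrt (2*δ) - 4)*((r:ℝ)*Real.log r)
      - (r:ℝ)*(Real.log 64 + Real.log (Real.log r)) + 2*Real.log δ - 2*Real.log 2 := by
    rw [← hμdef]
    have a1 : (r:ℝ)*Real.log (Real.log r) ≤ (r:ℝ)*((μ/2)*Real.log r) :=
      mul_le_mul_of_nonneg_left hll (by positivity)
    have a2 : (r:ℝ)*(Real.log 64 + 1) ≤ (r:ℝ)*((μ/2)*Real.log r) :=
      mul_le_mul_of_nonneg_left h64 (by positivity)
    have a3 : μ*((r:ℝ)*Real.log r) = (r:ℝ)*((μ/2)*Real.log r) + (r:ℝ)*((μ/2)*Real.log r) := by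
      ring
    have a4 : (r:ℝ)*(Real.log 64 + Real.log (Real.log r))
        = (r:ℝ)*Real.log 64 + (r:ℝ)*Real.log (Real.log r) := by ring
    have a5 : (r:ℝ)*(Real.log 64 + 1) = (r:ℝ)*Real.log 64 + (r:ℝ) := by ring
    linarith [a1, a2, a3, a4, a5, hrC]
  -- the numeric inequality
  have hnum := main_numeric c C δ r s kk hC hδ0 hc0 hr3 hk2 hs1' hsP hsub hlogy2 hEE
  exact volterra_assembly c C δ hC hc0 hδ0 hδ1 r hr3 hlog2 s hs1' PrIn hprimePr hupPr hlowPr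
    hk2 hnum hlogy2
end AuxVolterra
end

section
/- For every integer m ≥ 3 there exists a constant C_m > 0 such that for every integer n ≥ 2, ∑_{k∣n, Ω(k)=m} k^{2/m − 1} (log k)^m ≤ C_m (log n)², where the sum runs over the divisors k of n having exactly m prime factors counted with multiplicity. -/
open Finset Real

/-- polynomial dominated by exponential: `(d+2)^σ ≤ K 2^(b d)` (rpow). -/
lemma aux_poly_le_exp (σ : ℕ) (b : ℝ) (hb : 0 < b) :
    ∃ K : ℝ, 0 < K ∧ ∀ d : ℕ, ((d : ℝ) + 2) ^ σ ≤ K * (2 : ℝ) ^ (b * d) := by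
  set c : ℝ := b * Real.log 2 with hc
  have hc0 : 0 < c := mul_pos hb (Real.log_pos one_lt_two)
  refine ⟨(σ.factorial : ℝ) * Real.exp (2 * c) / c ^ σ, by positivity, fun d => ?_⟩
  have hx : (0:ℝ) ≤ c * ((d : ℝ) + 2) := by positivity
  have h1 : ((c * ((d:ℝ)+2)) ^ σ) / (σ.factorial : ℝ) ≤ Real.exp (c * ((d:ℝ)+2)) := by
    have := Real.sum_le_exp_of_nonneg hx (σ + 1)
    refine le_trans ?_ this
    exact Finset.single_le_sum (f := fun i => (c * ((d:ℝ)+2)) ^ i / (i.factorial : ℝ))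
      (fun i _ => by positivity) (Finset.self_mem_range_succ σ)
  have h2 : (c * ((d:ℝ)+2)) ^ σ = c ^ σ * ((d:ℝ)+2) ^ σ := mul_pow _ _ _
  have h3 : Real.exp (c * ((d:ℝ)+2)) = Real.exp (2*c) * Real.exp (c * d) := by
    rw [← Real.exp_add]; ring_nf
  have h4 : Real.exp (c * d) = (2:ℝ) ^ (b * d) := by
    rw [Real.rpow_def_of_pos two_pos, hc]; ring_nf
  have hfac : (0:ℝ) < (σ.factorial : ℝ) := by positivity
  rw [div_le_iff₀ hfac] at h1
  rw [h2, h3, h4] at h1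
  rw [div_mul_eq_mul_div, le_div_iff₀ (by positivity : (0:ℝ) < c ^ σ)]
  calc ((d:ℝ)+2) ^ σ * c ^ σ = c ^ σ * ((d:ℝ)+2) ^ σ := by ring
    _ ≤ Real.exp (2*c) * (2:ℝ) ^ (b * d) * (σ.factorial:ℝ) := h1
    _ = (σ.factorial:ℝ) * Real.exp (2*c) * (2:ℝ) ^ (b*d) := by ring

/-- uniform bound for geometric-with-polynomial sums. -/
lemma aux_geom_poly (σ : ℕ) (b : ℝ) (hb : 0 < b) :
    ∃ K : ℝ, 0 < K ∧ ∀ N : ℕ, ∑ d ∈ Finset.range N, ((d:ℝ)+2)^σ * (2:ℝ)^(-(b * d)) ≤ K := by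
  obtain ⟨K₁, hK₁, h₁⟩ := aux_poly_le_exp σ (b/2) (by positivity)
  set r : ℝ := (2:ℝ) ^ (-(b/2)) with hr
  have hr0 : 0 ≤ r := Real.rpow_nonneg (by norm_num) _
  have hr1 : r < 1 := by
    rw [hr]
    refine Real.rpow_lt_one_of_one_lt_of_neg one_lt_two (by linarith)
  refine ⟨K₁ * (1 - r)⁻¹, mul_pos hK₁ (inv_pos.2 (by linarith)), fun N => ?_⟩
  have key : ∀ d : ℕ, ((d:ℝ)+2)^σ * (2:ℝ)^(-(b*d)) ≤ K₁ * r ^ d := by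
    intro d
    have h2 : (2:ℝ)^(b/2 * d) * (2:ℝ)^(-(b*d)) = r ^ d := by
      rw [← Real.rpow_add two_pos, hr, ← Real.rpow_natCast ((2:ℝ)^(-(b/2))) d,
        ← Real.rpow_mul (by norm_num)]
      ring_nf
    calc ((d:ℝ)+2)^σ * (2:ℝ)^(-(b*d)) ≤ K₁ * (2:ℝ)^(b/2*d) * (2:ℝ)^(-(b*d)) := by
          have := h₁ d
          have hp : (0:ℝ) < (2:ℝ)^(-(b*d)) := Real.rpow_pos_of_pos two_pos _
          nlinarith [hp.le]
      _ = K₁ * r ^ d := by rw [mul_assoc, h2]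
  calc ∑ d ∈ Finset.range N, ((d:ℝ)+2)^σ * (2:ℝ)^(-(b*d))
      ≤ ∑ d ∈ Finset.range N, K₁ * r ^ d := Finset.sum_le_sum fun d _ => key d
    _ = K₁ * ∑ d ∈ Finset.range N, r ^ d := by rw [Finset.mul_sum]
    _ ≤ K₁ * (1 - r)⁻¹ := by
        refine mul_le_mul_of_nonneg_left ?_ hK₁.le
        have := Summable.sum_le_tsum (Finset.range N) (fun d _ => pow_nonneg hr0 d)
          (summable_geometric_of_lt_one hr0 hr1)
        rwa [tsum_geometric_of_lt_one hr0 hr1] at this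

/-- primes in a dyadic block `[2^j, 2^{j+1})` number at most `2^{j+2}/j`. -/
lemma aux_block_count (Q : Finset ℕ) (hQ : ∀ p ∈ Q, Nat.Prime p) (j : ℕ)
    (hj : ∀ p ∈ Q, Nat.log 2 p = j) : j * Q.card ≤ 2 ^ (j + 2) := by
  have hsub : Q ⊆ (Finset.range (2 ^ (j+1) + 1)).filter Nat.Prime := by
    intro p hp
    have hprime := hQ p hp
    have hlt : p < 2 ^ (j + 1) := by
      have := Nat.lt_pow_succ_log_self (b := 2) one_lt_two p
      rwa [hj p hp] at this
    simp [Finset.mem_filter, Finset.mem_range]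
    exact ⟨by omega, hprime⟩
  have hdvd : ∏ p ∈ Q, p ∣ primorial (2 ^ (j+1)) :=
    Finset.prod_dvd_prod_of_subset _ _ _ hsub
  have hle : ∏ p ∈ Q, p ≤ 4 ^ (2 ^ (j+1)) :=
    le_trans (Nat.le_of_dvd (primorial_pos _) hdvd) (primorial_le_4_pow _)
  have hlow : (2 ^ j) ^ Q.card ≤ ∏ p ∈ Q, p := by
    rw [← Finset.prod_const]
    refine Finset.prod_le_prod' fun p hp => ?_
    have := Nat.pow_log_le_self 2 (hQ p hp).pos.ne'
    rwa [hj p hp] at this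
  have h4 : (4:ℕ) ^ (2 ^ (j+1)) = 2 ^ (2 ^ (j+2)) := by
    rw [show (4:ℕ) = 2^2 by norm_num, ← pow_mul, pow_succ]
    ring_nf
  have : 2 ^ (j * Q.card) ≤ 2 ^ (2 ^ (j+2)) := by
    rw [pow_mul]
    exact le_trans hlow (h4 ▸ hle)
  exact (Nat.pow_le_pow_iff_right one_lt_two).mp this

lemma aux_W (σ : ℕ) (a : ℝ) (ha0 : 0 < a) (ha : a ≤ 2/3) :
    ∃ K : ℝ, 0 < K ∧ ∀ Q : Finset ℕ, (∀ p ∈ Q, Nat.Prime p) →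
      ((Nat.log 2 (∑ p ∈ Q, Nat.log 2 p) : ℝ) + 1) *
        ∑ p ∈ Q, (2:ℝ) ^ ((a - 1) * (Nat.log 2 p : ℝ)) * ((Nat.log 2 p : ℝ) + 1) ^ σ
      ≤ K * ((2:ℝ) ^ (a * (Nat.log 2 (∑ p ∈ Q, Nat.log 2 p) : ℝ)) *
          ((Nat.log 2 (∑ p ∈ Q, Nat.log 2 p) : ℝ) + 1) ^ σ) := by
  obtain ⟨K₀, hK₀, hpoly⟩ := aux_poly_le_exp σ (1/6) (by norm_num)
  obtain ⟨K₂, hK₂, hgeom⟩ := aux_geom_poly 1 a ha0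
  refine ⟨4*K₂ + 2^(σ+1)*K₀, by positivity, fun Q hQ => ?_⟩
  set B := ∑ p ∈ Q, Nat.log 2 p with hB
  set t := Nat.log 2 B with ht
  set φ : ℕ → ℝ := fun j => (2:ℝ) ^ ((a - 1) * (j : ℝ)) * ((j : ℝ) + 1) ^ σ with hφ
  have hφ0 : ∀ j, 0 ≤ φ j := fun j => by
    apply mul_nonneg (Real.rpow_nonneg (by norm_num) _)
    positivity
  have hj1 : ∀ p ∈ Q, 1 ≤ Nat.log 2 p := fun p hp => by
    have h2p : 2 ^ 1 ≤ p := by simpa using (hQ p hp).two_le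
    exact (Nat.le_log_iff_pow_le one_lt_two (hQ p hp).pos.ne').2 h2p
  have hBlt : B < 2 ^ (t + 1) := Nat.lt_pow_succ_log_self one_lt_two B
  -- pointwise bound used in the high range
  have hhi_pt : ∀ d : ℕ, (d:ℝ)^σ * (2:ℝ)^((a-1)*(d:ℝ)) ≤ K₀ := by
    intro d
    have h1 : (d:ℝ)^σ ≤ ((d:ℝ)+2)^σ := pow_le_pow_left₀ (by positivity) (by linarith) σ
    have h2 : (2:ℝ)^((a-1)*(d:ℝ)) ≤ (2:ℝ)^(-(1/3) * (d:ℝ)) := by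
      apply Real.rpow_le_rpow_of_exponent_le one_le_two
      have : (0:ℝ) ≤ (d:ℝ) := Nat.cast_nonneg d
      nlinarith
    calc (d:ℝ)^σ * (2:ℝ)^((a-1)*(d:ℝ)) ≤ (((d:ℝ)+2)^σ) * (2:ℝ)^(-(1/3)*(d:ℝ)) := by
          apply mul_le_mul h1 h2 (Real.rpow_nonneg (by norm_num) _) (by positivity)
      _ ≤ (K₀ * (2:ℝ)^((1/6)*(d:ℝ))) * (2:ℝ)^(-(1/3)*(d:ℝ)) := by
          apply mul_le_mul_of_nonneg_right (hpoly d) (Real.rpow_nonneg (by norm_num) _)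
      _ = K₀ * (2:ℝ)^(-(1/6)*(d:ℝ)) := by
          rw [mul_assoc, ← Real.rpow_add two_pos]; ring_nf
      _ ≤ K₀ * 1 := by
          apply mul_le_mul_of_nonneg_left _ hK₀.le
          apply Real.rpow_le_one_of_one_le_of_nonpos one_le_two
          have : (0:ℝ) ≤ (d:ℝ) := Nat.cast_nonneg d
          nlinarith
      _ = K₀ := mul_one K₀
  -- split into low and high parts
  have hsplit : ∑ p ∈ Q, φ (Nat.log 2 p) =
      (∑ p ∈ Q.filter (fun p => Nat.log 2 p ≤ t), φ (Nat.log 2 p)) +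
      (∑ p ∈ Q.filter (fun p => ¬ Nat.log 2 p ≤ t), φ (Nat.log 2 p)) :=
    (Finset.sum_filter_add_sum_filter_not Q _ _).symm
  -- HIGH part
  have hhigh : ((t:ℝ)+1) * ∑ p ∈ Q.filter (fun p => ¬ Nat.log 2 p ≤ t), φ (Nat.log 2 p)
      ≤ 2^(σ+1) * K₀ * ((2:ℝ)^(a*(t:ℝ)) * ((t:ℝ)+1)^σ) := by
    set Qhi := Q.filter (fun p => ¬ Nat.log 2 p ≤ t) with hQhi
    have hmem : ∀ p ∈ Qhi, t + 1 ≤ Nat.log 2 p := fun p hp => by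
      have := (Finset.mem_filter.1 hp).2; omega
    -- pointwise bound
    have hpt : ∀ p ∈ Qhi, φ (Nat.log 2 p) ≤
        2^σ * K₀ * (((t:ℝ)+1)^σ * (2:ℝ)^((a-1)*(t:ℝ))) := by
      intro p hp
      set j := Nat.log 2 p with hjdef
      set d := j - t with hd
      have hd1 : 1 ≤ d := by have := hmem p hp; omega
      have hjtd : j = t + d := by have := hmem p hp; omega
      have hcast : (j:ℝ) = (t:ℝ) + (d:ℝ) := by rw [hjtd]; push_cast; ring
      have hsplit2 : (2:ℝ)^((a-1)*(j:ℝ)) = (2:ℝ)^((a-1)*(t:ℝ)) * (2:ℝ)^((a-1)*(d:ℝ)) := by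
        rw [← Real.rpow_add two_pos, hcast]; ring_nf
      have hjb : ((j:ℝ)+1)^σ ≤ (2*((t:ℝ)+1))^σ * (d:ℝ)^σ := by
        rw [← mul_pow]
        apply pow_le_pow_left₀ (by positivity)
        have h1 : (1:ℝ) ≤ (d:ℝ) := by exact_mod_cast hd1
        rw [hcast]; nlinarith
      calc φ j = (2:ℝ)^((a-1)*(j:ℝ)) * ((j:ℝ)+1)^σ := rfl
        _ ≤ (2:ℝ)^((a-1)*(j:ℝ)) * ((2*((t:ℝ)+1))^σ * (d:ℝ)^σ) := by
            apply mul_le_mul_of_nonneg_left hjb (Real.rpow_nonneg (by norm_num) _)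
        _ = (2^σ * ((t:ℝ)+1)^σ) * ((d:ℝ)^σ * (2:ℝ)^((a-1)*(d:ℝ))) * (2:ℝ)^((a-1)*(t:ℝ)) := by
            rw [hsplit2, mul_pow]; ring
        _ ≤ (2^σ * ((t:ℝ)+1)^σ) * K₀ * (2:ℝ)^((a-1)*(t:ℝ)) := by
            apply mul_le_mul_of_nonneg_right _ (Real.rpow_nonneg (by norm_num) _)
            apply mul_le_mul_of_nonneg_left (hhi_pt d) (by positivity)
        _ = 2^σ * K₀ * (((t:ℝ)+1)^σ * (2:ℝ)^((a-1)*(t:ℝ))) := by ring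
    -- cardinality bound
    have hcard : Qhi.card * (t+1) ≤ B := by
      calc Qhi.card * (t+1) = ∑ _p ∈ Qhi, (t+1) := by rw [Finset.sum_const, smul_eq_mul]
        _ ≤ ∑ p ∈ Qhi, Nat.log 2 p := Finset.sum_le_sum hmem
        _ ≤ B := Finset.sum_le_sum_of_subset (Finset.filter_subset _ _)
    have hcardR : ((t:ℝ)+1) * (Qhi.card : ℝ) ≤ (2:ℝ)^((t:ℝ)+1) := by
      have h1 : ((Qhi.card * (t+1) : ℕ) : ℝ) ≤ (B:ℝ) := Nat.cast_le.2 hcard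
      have h2 : (B:ℝ) ≤ ((2^(t+1) : ℕ) : ℝ) := Nat.cast_le.2 hBlt.le
      have h3 : ((2^(t+1) : ℕ) : ℝ) = (2:ℝ)^((t:ℝ)+1) := by
        push_cast
        rw [← Real.rpow_natCast 2 (t+1)]
        push_cast; ring_nf
      push_cast at h1
      calc ((t:ℝ)+1) * (Qhi.card : ℝ) = (Qhi.card : ℝ) * ((t:ℝ)+1) := by ring
        _ ≤ (B:ℝ) := h1
        _ ≤ (2:ℝ)^((t:ℝ)+1) := h3 ▸ h2
    calc ((t:ℝ)+1) * ∑ p ∈ Qhi, φ (Nat.log 2 p)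
        ≤ ((t:ℝ)+1) * ∑ _p ∈ Qhi, (2^σ * K₀ * (((t:ℝ)+1)^σ * (2:ℝ)^((a-1)*(t:ℝ)))) := by
          apply mul_le_mul_of_nonneg_left (Finset.sum_le_sum hpt) (by positivity)
      _ = (((t:ℝ)+1) * (Qhi.card:ℝ)) * (2^σ * K₀ * (((t:ℝ)+1)^σ * (2:ℝ)^((a-1)*(t:ℝ)))) := by
          rw [Finset.sum_const, nsmul_eq_mul]; ring
      _ ≤ (2:ℝ)^((t:ℝ)+1) * (2^σ * K₀ * (((t:ℝ)+1)^σ * (2:ℝ)^((a-1)*(t:ℝ)))) := by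
          apply mul_le_mul_of_nonneg_right hcardR
          positivity
      _ = 2^σ * K₀ * (((2:ℝ)^((t:ℝ)+1) * (2:ℝ)^((a-1)*(t:ℝ))) * ((t:ℝ)+1)^σ) := by
          ring
      _ = 2^(σ+1) * K₀ * ((2:ℝ)^(a*(t:ℝ)) * ((t:ℝ)+1)^σ) := by
          rw [← Real.rpow_add two_pos, show (t:ℝ)+1+((a-1)*(t:ℝ)) = a*(t:ℝ)+1 by ring,
            Real.rpow_add two_pos, Real.rpow_one, pow_succ]
          ring
  -- LOW part
  have hlow : ((t:ℝ)+1) * ∑ p ∈ Q.filter (fun p => Nat.log 2 p ≤ t), φ (Nat.log 2 p)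
      ≤ 4*K₂ * ((2:ℝ)^(a*(t:ℝ)) * ((t:ℝ)+1)^σ) := by
    set Qlo := Q.filter (fun p => Nat.log 2 p ≤ t) with hQlo
    set g : ℕ → ℝ := fun j => ((2:ℝ)^(j+2) / (j:ℝ)) * φ j with hg
    have hg0 : ∀ j, 0 ≤ g j := fun j => mul_nonneg (div_nonneg (by positivity) (Nat.cast_nonneg j)) (hφ0 j)
    set ψ : ℕ → ℝ := fun d => ((d:ℝ)+2) * (2:ℝ)^(-(a*(d:ℝ))) with hψ
    have hcomp : ∑ p ∈ Qlo, φ (Nat.log 2 p) =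
        ∑ j ∈ Qlo.image (Nat.log 2), ((Qlo.filter (fun p => Nat.log 2 p = j)).card) • φ j :=
      Finset.sum_comp φ (Nat.log 2)
    have himg : Qlo.image (Nat.log 2) ⊆ Finset.Icc 1 t := by
      intro j hj
      obtain ⟨p, hp, rfl⟩ := Finset.mem_image.1 hj
      have hpQ : p ∈ Q := (Finset.mem_filter.1 hp).1
      have hpt : Nat.log 2 p ≤ t := (Finset.mem_filter.1 hp).2
      exact Finset.mem_Icc.2 ⟨hj1 p hpQ, hpt⟩
    have hfiber : ∀ j ∈ Qlo.image (Nat.log 2),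
        ((Qlo.filter (fun p => Nat.log 2 p = j)).card) • φ j ≤ g j := by
      intro j hj
      have hj1' : 1 ≤ j := (Finset.mem_Icc.1 (himg hj)).1
      have hcnt : j * (Qlo.filter (fun p => Nat.log 2 p = j)).card ≤ 2^(j+2) := by
        apply aux_block_count
        · intro p hp
          exact hQ p ((Finset.mem_filter.1 ((Finset.mem_filter.1 hp).1)).1)
        · intro p hp
          exact (Finset.mem_filter.1 hp).2
      have hcntR : ((Qlo.filter (fun p => Nat.log 2 p = j)).card : ℝ) ≤ (2:ℝ)^(j+2) / (j:ℝ) := by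
        rw [le_div_iff₀ (by exact_mod_cast hj1' : (0:ℝ) < (j:ℝ))]
        have := (Nat.cast_le (α := ℝ)).2 hcnt
        push_cast at this ⊢
        linarith
      rw [nsmul_eq_mul]
      exact mul_le_mul_of_nonneg_right hcntR (hφ0 j)
    have hstep1 : ∑ p ∈ Qlo, φ (Nat.log 2 p) ≤ ∑ j ∈ Finset.Icc 1 t, g j := by
      rw [hcomp]
      calc ∑ j ∈ Qlo.image (Nat.log 2), ((Qlo.filter (fun p => Nat.log 2 p = j)).card) • φ j
          ≤ ∑ j ∈ Qlo.image (Nat.log 2), g j := Finset.sum_le_sum hfiber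
        _ ≤ ∑ j ∈ Finset.Icc 1 t, g j :=
            Finset.sum_le_sum_of_subset_of_nonneg himg (fun j _ _ => hg0 j)
    -- per-term bound on Icc 1 t
    have hkey : ∀ j ∈ Finset.Icc 1 t, ((t:ℝ)+1) * g j
        ≤ 4 * ((2:ℝ)^(a*(t:ℝ)) * ((t:ℝ)+1)^σ) * ψ (t - j) := by
      intro j hj
      obtain ⟨hj1', hjt⟩ := Finset.mem_Icc.1 hj
      have hjR : (1:ℝ) ≤ (j:ℝ) := by exact_mod_cast hj1'
      have hcastsub : ((t - j : ℕ) : ℝ) = (t:ℝ) - (j:ℝ) := by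
        rw [Nat.cast_sub hjt]
      -- (t+1)/j ≤ (t-j)+2
      have hdiv : ((t:ℝ)+1) / (j:ℝ) ≤ ((t - j : ℕ):ℝ) + 2 := by
        rw [div_le_iff₀ (by linarith : (0:ℝ) < (j:ℝ))]
        have hnat : t + 1 ≤ ((t - j) + 2) * j := by nlinarith [Nat.sub_add_cancel hjt]
        calc ((t:ℝ)+1) = (((t+1 : ℕ)):ℝ) := by push_cast; ring
          _ ≤ ((((t - j) + 2) * j : ℕ) : ℝ) := Nat.cast_le.2 hnat
          _ = (((t - j:ℕ):ℝ) + 2) * (j:ℝ) := by push_cast; ring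
      -- 2^(j+2) = 4 * 2^(j:ℝ)
      have hp2 : ((2:ℝ)^(j+2) : ℝ) = 4 * (2:ℝ)^((j:ℝ)) := by
        rw [pow_add, ← Real.rpow_natCast 2 j]; norm_num; ring
      have hexp : (2:ℝ)^((j:ℝ)) * (2:ℝ)^((a-1)*(j:ℝ)) = (2:ℝ)^(a*(j:ℝ)) := by
        rw [← Real.rpow_add two_pos]; ring_nf
      have hexp2 : (2:ℝ)^(a*(j:ℝ)) = (2:ℝ)^(a*(t:ℝ)) * (2:ℝ)^(-(a*((t-j:ℕ):ℝ))) := by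
        rw [← Real.rpow_add two_pos, hcastsub]; ring_nf
      have hmono : ((j:ℝ)+1)^σ ≤ ((t:ℝ)+1)^σ := by
        apply pow_le_pow_left₀ (by linarith)
        have : (j:ℝ) ≤ (t:ℝ) := by exact_mod_cast hjt
        linarith
      have hgj : ((t:ℝ)+1) * g j =
          (((t:ℝ)+1)/(j:ℝ)) * (4 * (2:ℝ)^(a*(j:ℝ))) * ((j:ℝ)+1)^σ := by
        rw [hg, hφ]
        simp only []
        rw [hp2, ← hexp]
        ring
      rw [hgj, hexp2]
      have h1 : (((t:ℝ)+1)/(j:ℝ)) * (4 * ((2:ℝ)^(a*(t:ℝ)) * (2:ℝ)^(-(a*((t-j:ℕ):ℝ))))) * ((j:ℝ)+1)^σ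
          ≤ (((t-j:ℕ):ℝ) + 2) * (4 * ((2:ℝ)^(a*(t:ℝ)) * (2:ℝ)^(-(a*((t-j:ℕ):ℝ))))) * ((t:ℝ)+1)^σ := by
        apply mul_le_mul
        · apply mul_le_mul_of_nonneg_right hdiv
          positivity
        · exact hmono
        · positivity
        · positivity
      calc (((t:ℝ)+1)/(j:ℝ)) * (4 * ((2:ℝ)^(a*(t:ℝ)) * (2:ℝ)^(-(a*((t-j:ℕ):ℝ))))) * ((j:ℝ)+1)^σ
          ≤ (((t-j:ℕ):ℝ) + 2) * (4 * ((2:ℝ)^(a*(t:ℝ)) * (2:ℝ)^(-(a*((t-j:ℕ):ℝ))))) * ((t:ℝ)+1)^σ := h1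
        _ = 4 * ((2:ℝ)^(a*(t:ℝ)) * ((t:ℝ)+1)^σ) * ψ (t - j) := by rw [hψ]; ring
    -- reindex and finish
    have hre : ∑ j ∈ Finset.Icc 1 t, ψ (t - j) = ∑ d ∈ Finset.range t, ψ d := by
      exact Finset.sum_nbij' (fun j => t - j) (fun d => t - d)
        (fun j hj => by
          have := Finset.mem_Icc.1 hj; show t - j ∈ Finset.range t
          exact Finset.mem_range.2 (by omega))
        (fun d hd => by
          have := Finset.mem_range.1 hd; show t - d ∈ Finset.Icc 1 t
          exact Finset.mem_Icc.2 (by omega))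
        (fun j hj => by have := Finset.mem_Icc.1 hj; show t - (t - j) = j; omega)
        (fun d hd => by have := Finset.mem_range.1 hd; show t - (t - d) = d; omega)
        (fun j hj => rfl)
    have hψsum : ∑ j ∈ Finset.Icc 1 t, ψ (t - j) ≤ K₂ := by
      rw [hre]
      have := hgeom t
      simp only [pow_one] at this
      exact this
    calc ((t:ℝ)+1) * ∑ p ∈ Qlo, φ (Nat.log 2 p)
        ≤ ((t:ℝ)+1) * ∑ j ∈ Finset.Icc 1 t, g j :=
          mul_le_mul_of_nonneg_left hstep1 (by positivity)
      _ = ∑ j ∈ Finset.Icc 1 t, ((t:ℝ)+1) * g j := by rw [Finset.mul_sum]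
      _ ≤ ∑ j ∈ Finset.Icc 1 t, 4 * ((2:ℝ)^(a*(t:ℝ)) * ((t:ℝ)+1)^σ) * ψ (t - j) :=
          Finset.sum_le_sum hkey
      _ = 4 * ((2:ℝ)^(a*(t:ℝ)) * ((t:ℝ)+1)^σ) * ∑ j ∈ Finset.Icc 1 t, ψ (t - j) := by
          rw [← Finset.mul_sum]
      _ ≤ 4 * ((2:ℝ)^(a*(t:ℝ)) * ((t:ℝ)+1)^σ) * K₂ :=
          mul_le_mul_of_nonneg_left hψsum (by positivity)
      _ = 4*K₂ * ((2:ℝ)^(a*(t:ℝ)) * ((t:ℝ)+1)^σ) := by ring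
  -- ASSEMBLE
  calc ((t:ℝ)+1) * ∑ p ∈ Q, (2:ℝ) ^ ((a - 1) * (Nat.log 2 p : ℝ)) * ((Nat.log 2 p : ℝ) + 1) ^ σ
      = ((t:ℝ)+1) * ((∑ p ∈ Q.filter (fun p => Nat.log 2 p ≤ t), φ (Nat.log 2 p)) +
        (∑ p ∈ Q.filter (fun p => ¬ Nat.log 2 p ≤ t), φ (Nat.log 2 p))) := by
        rw [← hsplit]
    _ = ((t:ℝ)+1) * (∑ p ∈ Q.filter (fun p => Nat.log 2 p ≤ t), φ (Nat.log 2 p)) +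
        ((t:ℝ)+1) * (∑ p ∈ Q.filter (fun p => ¬ Nat.log 2 p ≤ t), φ (Nat.log 2 p)) := by ring
    _ ≤ 4*K₂ * ((2:ℝ)^(a*(t:ℝ)) * ((t:ℝ)+1)^σ) +
        2^(σ+1) * K₀ * ((2:ℝ)^(a*(t:ℝ)) * ((t:ℝ)+1)^σ) := add_le_add hlow hhigh
    _ = (4*K₂ + 2^(σ+1)*K₀) * ((2:ℝ)^(a*(t:ℝ)) * ((t:ℝ)+1)^σ) := by ring

lemma aux_log_nat_nonneg (q : ℕ) : 0 ≤ Real.log q := by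
  rcases Nat.eq_zero_or_pos q with h | h
  · simp [h]
  · exact Real.log_natCast_nonneg q

lemma aux_list_rpow (c : ℝ) : ∀ l : List ℕ, (∀ p ∈ l, 1 ≤ p) →
    ((l.prod : ℕ) : ℝ) ^ c = (l.map (fun p : ℕ => ((p:ℕ):ℝ) ^ c)).prod := by
  intro l
  induction l with
  | nil => intro _; simp [Real.one_rpow]
  | cons p l ih =>
    intro h
    have hl : ∀ q ∈ l, 1 ≤ q := fun q hq => h q (List.mem_cons_of_mem p hq)
    rw [List.prod_cons, List.map_cons, List.prod_cons, Nat.cast_mul,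
      Real.mul_rpow (Nat.cast_nonneg _) (Nat.cast_nonneg _), ih hl]

lemma aux_list_log : ∀ l : List ℕ, (∀ p ∈ l, 1 ≤ p) →
    Real.log ((l.prod : ℕ) : ℝ) = (l.map (fun p : ℕ => Real.log ((p:ℕ):ℝ))).sum := by
  intro l
  induction l with
  | nil => intro _; simp
  | cons p l ih =>
    intro h
    have hp : 1 ≤ p := h p List.mem_cons_self
    have hl : ∀ q ∈ l, 1 ≤ q := fun q hq => h q (List.mem_cons_of_mem p hq)
    have hprod : 0 < l.prod := List.prod_pos (fun q hq => hl q hq)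
    rw [List.prod_cons, List.map_cons, List.sum_cons, Nat.cast_mul,
      Real.log_mul (Nat.cast_ne_zero.2 (by omega))
        (by exact_mod_cast hprod.ne' : ((l.prod:ℕ):ℝ) ≠ 0), ih hl]

lemma aux_ofFn_getD {α : Type*} (d : α) (l : List α) (m : ℕ) (hl : l.length = m) :
    List.ofFn (fun i : Fin m => l.getD i d) = l := by
  subst hl
  have : (fun i : Fin l.length => l.getD i d) = l.get := by
    funext i
    rw [List.getD_eq_getElem l d i.isLt]
    simp
  rw [this, List.ofFn_get]

lemma aux_partI (m : ℕ) (hm : 3 ≤ m) (n : ℕ) (hn : 2 ≤ n) :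
    ∑ k ∈ n.divisors.filter (fun k => k.primeFactorsList.length = m),
        (k : ℝ) ^ (2/(m:ℝ) - 1) * Real.log k ^ m
      ≤ (m:ℝ)^m * ((∑ p ∈ n.primeFactors, Real.log p ^ m * (p:ℝ)^(2/(m:ℝ)-1)) *
          (∑ p ∈ n.primeFactors, (p:ℝ)^(2/(m:ℝ)-1)) ^ (m-1)) := by
  have hn0 : n ≠ 0 := by omega
  set c : ℝ := 2/(m:ℝ) - 1 with hc
  set Q := n.primeFactors with hQ
  set U : ℝ := ∑ p ∈ Q, Real.log p ^ m * (p:ℝ)^c with hU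
  set V : ℝ := ∑ p ∈ Q, (p:ℝ)^c with hV
  set F : (Fin m → ℕ) → ℝ := fun g => ∑ i, Real.log (g i) ^ m * ∏ j, ((g j : ℕ):ℝ)^c with hF
  have hF0 : ∀ g : Fin m → ℕ, 0 ≤ F g := by
    intro g
    apply Finset.sum_nonneg
    intro i _
    apply mul_nonneg (pow_nonneg (aux_log_nat_nonneg _) m)
    exact Finset.prod_nonneg (fun j _ => Real.rpow_nonneg (Nat.cast_nonneg _) c)
  set G : ℕ → (Fin m → ℕ) := fun k => (fun i => (k.primeFactorsList).getD i 2) with hG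
  set D := n.divisors.filter (fun k => k.primeFactorsList.length = m) with hD
  -- step 1 : pointwise bound
  have step1 : ∀ k ∈ D, (k : ℝ) ^ c * Real.log k ^ m ≤ (m:ℝ)^(m-1) * F (G k) := by
    intro k hk
    obtain ⟨hkdvd, hklen⟩ := Finset.mem_filter.1 hk
    have hk0 : k ≠ 0 := (Nat.pos_of_mem_divisors hkdvd).ne'
    have hl1 : ∀ p ∈ k.primeFactorsList, 1 ≤ p :=
      fun p hp => (Nat.prime_of_mem_primeFactorsList hp).one_lt.le
    have hofn : List.ofFn (G k) = k.primeFactorsList := aux_ofFn_getD 2 _ m hklen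
    have hprod : k = k.primeFactorsList.prod := (Nat.prod_primeFactorsList hk0).symm
    have hrpow : (k : ℝ) ^ c = ∏ i : Fin m, ((G k i : ℕ):ℝ)^c := by
      calc (k : ℝ) ^ c = ((k.primeFactorsList.prod : ℕ):ℝ)^c := by rw [← hprod]
        _ = (k.primeFactorsList.map (fun p : ℕ => ((p:ℕ):ℝ) ^ c)).prod :=
            aux_list_rpow c _ hl1
        _ = ((List.ofFn (G k)).map (fun p : ℕ => ((p:ℕ):ℝ) ^ c)).prod := by rw [hofn]
        _ = ∏ i : Fin m, ((G k i : ℕ):ℝ)^c := by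
            rw [List.map_ofFn, List.prod_ofFn]; rfl
    have hlog : Real.log k = ∑ i : Fin m, Real.log (G k i) := by
      calc Real.log (k:ℝ) = Real.log ((k.primeFactorsList.prod : ℕ):ℝ) := by rw [← hprod]
        _ = (k.primeFactorsList.map (fun p : ℕ => Real.log ((p:ℕ):ℝ))).sum :=
            aux_list_log _ hl1
        _ = ((List.ofFn (G k)).map (fun p : ℕ => Real.log ((p:ℕ):ℝ))).sum := by rw [hofn]
        _ = ∑ i : Fin m, Real.log (G k i) := by
            rw [List.map_ofFn, List.sum_ofFn]; rfl
    have hjensen : (∑ i : Fin m, Real.log (G k i)) ^ m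
        ≤ (m:ℝ)^(m-1) * ∑ i : Fin m, Real.log (G k i) ^ m := by
      have := pow_sum_le_card_mul_sum_pow (s := (Finset.univ : Finset (Fin m)))
        (f := fun i : Fin m => Real.log (G k i))
        (fun i _ => aux_log_nat_nonneg _) (m-1)
      rw [Nat.sub_add_cancel (by omega : 1 ≤ m)] at this
      simpa using this
    have hprodnn : (0:ℝ) ≤ ∏ i : Fin m, ((G k i : ℕ):ℝ)^c :=
      Finset.prod_nonneg (fun j _ => Real.rpow_nonneg (Nat.cast_nonneg _) c)
    calc (k : ℝ) ^ c * Real.log k ^ m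
        = (∏ i : Fin m, ((G k i : ℕ):ℝ)^c) * (∑ i : Fin m, Real.log (G k i)) ^ m := by
          rw [hrpow, hlog]
      _ ≤ (∏ i : Fin m, ((G k i : ℕ):ℝ)^c) *
          ((m:ℝ)^(m-1) * ∑ i : Fin m, Real.log (G k i) ^ m) :=
          mul_le_mul_of_nonneg_left hjensen hprodnn
      _ = (m:ℝ)^(m-1) * ((∑ i : Fin m, Real.log (G k i) ^ m) * ∏ j : Fin m, ((G k j : ℕ):ℝ)^c) := by
          ring
      _ = (m:ℝ)^(m-1) * ∑ i : Fin m, Real.log (G k i) ^ m * ∏ j : Fin m, ((G k j : ℕ):ℝ)^c := by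
          rw [Finset.sum_mul]
      _ = (m:ℝ)^(m-1) * F (G k) := rfl
  -- step 2 : injectivity and image
  have hinj : Set.InjOn G D := by
    intro k₁ h₁ k₂ h₂ hEq
    have hlen₁ := (Finset.mem_filter.1 h₁).2
    have hlen₂ := (Finset.mem_filter.1 h₂).2
    have hk₁ : k₁ ≠ 0 := (Nat.pos_of_mem_divisors (Finset.mem_filter.1 h₁).1).ne'
    have hk₂ : k₂ ≠ 0 := (Nat.pos_of_mem_divisors (Finset.mem_filter.1 h₂).1).ne'
    have e₁ : List.ofFn (G k₁) = k₁.primeFactorsList := aux_ofFn_getD 2 _ m hlen₁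
    have e₂ : List.ofFn (G k₂) = k₂.primeFactorsList := aux_ofFn_getD 2 _ m hlen₂
    have hll : k₁.primeFactorsList = k₂.primeFactorsList := by rw [← e₁, ← e₂, hEq]
    calc k₁ = k₁.primeFactorsList.prod := (Nat.prod_primeFactorsList hk₁).symm
      _ = k₂.primeFactorsList.prod := by rw [hll]
      _ = k₂ := Nat.prod_primeFactorsList hk₂
  have himg : ∀ k ∈ D, G k ∈ Fintype.piFinset (fun _ : Fin m => Q) := by
    intro k hk
    obtain ⟨hkdvd, hklen⟩ := Finset.mem_filter.1 hk
    have hk0 : k ≠ 0 := (Nat.pos_of_mem_divisors hkdvd).ne'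
    have hkn : k ∣ n := (Nat.mem_divisors.1 hkdvd).1
    apply Fintype.mem_piFinset.2
    intro i
    have hofn : List.ofFn (G k) = k.primeFactorsList := aux_ofFn_getD 2 _ m hklen
    have hGmem : G k i ∈ k.primeFactorsList := by
      rw [← hofn]; exact List.mem_ofFn.2 ⟨i, rfl⟩
    have hfac := (Nat.mem_primeFactorsList hk0).1 hGmem
    exact Nat.mem_primeFactors.2 ⟨hfac.1, hfac.2.trans hkn, hn0⟩
  have step2 : ∑ k ∈ D, F (G k) ≤ ∑ g ∈ Fintype.piFinset (fun _ : Fin m => Q), F g := by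
    rw [← Finset.sum_image (f := F) (g := G) (fun x hx y hy h => hinj hx hy h)]
    apply Finset.sum_le_sum_of_subset_of_nonneg
    · intro g hg
      obtain ⟨k, hk, rfl⟩ := Finset.mem_image.1 hg
      exact himg k hk
    · intro g _ _
      exact hF0 g
  -- step 3 : factorization
  have hfix : ∀ i : Fin m, ∑ g ∈ Fintype.piFinset (fun _ : Fin m => Q),
      Real.log (g i) ^ m * ∏ j, ((g j : ℕ):ℝ)^c = U * V^(m-1) := by
    intro i
    have hR : ∀ g : Fin m → ℕ,
        (∏ j, if j = i then Real.log (g j) ^ m * ((g j:ℕ):ℝ)^c else ((g j:ℕ):ℝ)^c)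
          = Real.log (g i) ^ m * ∏ j, ((g j:ℕ):ℝ)^c := by
      intro g
      rw [← Finset.mul_prod_erase Finset.univ
          (fun j => if j = i then Real.log (g j) ^ m * ((g j:ℕ):ℝ)^c else ((g j:ℕ):ℝ)^c)
          (Finset.mem_univ i),
        ← Finset.mul_prod_erase Finset.univ (fun j => ((g j:ℕ):ℝ)^c) (Finset.mem_univ i),
        if_pos rfl,
        Finset.prod_congr rfl
          (fun j hj => if_neg (Finset.ne_of_mem_erase hj) :
            ∀ j ∈ Finset.univ.erase i,
              (if j = i then Real.log (g j) ^ m * ((g j:ℕ):ℝ)^c else ((g j:ℕ):ℝ)^c)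
                = ((g j:ℕ):ℝ)^c)]
      ring
    have hL : (∏ j : Fin m, ∑ p ∈ Q,
        (if j = i then Real.log p ^ m * ((p:ℕ):ℝ)^c else ((p:ℕ):ℝ)^c)) = U * V^(m-1) := by
      have hcong : ∀ j : Fin m, (∑ p ∈ Q,
          (if j = i then Real.log p ^ m * ((p:ℕ):ℝ)^c else ((p:ℕ):ℝ)^c)) = if j = i then U else V := by
        intro j
        by_cases hji : j = i <;> simp [hji, hU, hV]
      rw [Finset.prod_congr rfl (fun j _ => hcong j),
        ← Finset.mul_prod_erase Finset.univ _ (Finset.mem_univ i), if_pos rfl,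
        Finset.prod_congr rfl
          (fun j hj => if_neg (Finset.ne_of_mem_erase hj) :
            ∀ j ∈ Finset.univ.erase i, (if j = i then U else V) = V),
        Finset.prod_const, Finset.card_erase_of_mem (Finset.mem_univ i),
        Finset.card_univ, Fintype.card_fin]
    calc ∑ g ∈ Fintype.piFinset (fun _ : Fin m => Q),
          Real.log (g i) ^ m * ∏ j, ((g j : ℕ):ℝ)^c
        = ∑ g ∈ Fintype.piFinset (fun _ : Fin m => Q),
          ∏ j, (if j = i then Real.log (g j) ^ m * ((g j:ℕ):ℝ)^c else ((g j:ℕ):ℝ)^c) :=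
          Finset.sum_congr rfl (fun g _ => (hR g).symm)
      _ = ∏ j : Fin m, ∑ p ∈ Q,
          (if j = i then Real.log p ^ m * ((p:ℕ):ℝ)^c else ((p:ℕ):ℝ)^c) :=
          (Finset.prod_univ_sum (fun _ : Fin m => Q)
            (fun j p => if j = i then Real.log p ^ m * ((p:ℕ):ℝ)^c else ((p:ℕ):ℝ)^c)).symm
      _ = U * V^(m-1) := hL
  have step3 : ∑ g ∈ Fintype.piFinset (fun _ : Fin m => Q), F g = (m:ℝ) * (U * V^(m-1)) := by
    calc ∑ g ∈ Fintype.piFinset (fun _ : Fin m => Q), F g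
        = ∑ g ∈ Fintype.piFinset (fun _ : Fin m => Q), ∑ i : Fin m,
            Real.log (g i) ^ m * ∏ j, ((g j : ℕ):ℝ)^c := rfl
      _ = ∑ i : Fin m, ∑ g ∈ Fintype.piFinset (fun _ : Fin m => Q),
            Real.log (g i) ^ m * ∏ j, ((g j : ℕ):ℝ)^c := Finset.sum_comm
      _ = ∑ _i : Fin m, U * V^(m-1) := Finset.sum_congr rfl (fun i _ => hfix i)
      _ = (m:ℝ) * (U * V^(m-1)) := by
          rw [Finset.sum_const, Finset.card_univ, Fintype.card_fin, nsmul_eq_mul]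
  -- assemble
  calc ∑ k ∈ D, (k : ℝ) ^ c * Real.log k ^ m
      ≤ ∑ k ∈ D, (m:ℝ)^(m-1) * F (G k) := Finset.sum_le_sum step1
    _ = (m:ℝ)^(m-1) * ∑ k ∈ D, F (G k) := by rw [Finset.mul_sum]
    _ ≤ (m:ℝ)^(m-1) * ∑ g ∈ Fintype.piFinset (fun _ : Fin m => Q), F g := by
        apply mul_le_mul_of_nonneg_left step2
        positivity
    _ = (m:ℝ)^(m-1) * ((m:ℝ) * (U * V^(m-1))) := by rw [step3]
    _ = (m:ℝ)^m * (U * V^(m-1)) := by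
        rw [← mul_assoc, ← pow_succ, Nat.sub_add_cancel (by omega : 1 ≤ m)]

/-- for every `m ≥ 3` there is a constant `C_m > 0` such that for every
`n ≥ 2`, `∑_{k∣n, Ω(k)=m} k^{2/m−1} (log k)^m ≤ C_m (log n)²`, where `Ω` counts prime
factors with multiplicity. -/
theorem divisor_sum_m_homogeneous_bound (m : ℕ) (hm : 3 ≤ m) :
    ∃ C : ℝ, 0 < C ∧ ∀ n : ℕ, 2 ≤ n →
      ∑ k ∈ n.divisors.filter (fun k => k.primeFactorsList.length = m),
          (k : ℝ) ^ (2 / (m : ℝ) - 1) * Real.log k ^ m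
        ≤ C * Real.log n ^ 2 := by
  have hmR : (3:ℝ) ≤ (m:ℝ) := by exact_mod_cast hm
  have hm0 : (0:ℝ) < (m:ℝ) := by linarith
  have ha0 : 0 < 2/(m:ℝ) := by positivity
  have ha23 : 2/(m:ℝ) ≤ 2/3 := by
    rw [div_le_div_iff₀ hm0 (by norm_num)]
    linarith
  obtain ⟨Km, hKm, hWm⟩ := aux_W m (2/(m:ℝ)) ha0 ha23
  obtain ⟨K0, hK0, hW0⟩ := aux_W 0 (2/(m:ℝ)) ha0 ha23
  have hlog2 : 0 < Real.log 2 := Real.log_pos one_lt_two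
  refine ⟨(m:ℝ)^m * (Km * K0^(m-1)) / (Real.log 2)^2, by positivity, fun n hn => ?_⟩
  have hn0 : n ≠ 0 := by omega
  set Q := n.primeFactors with hQ
  have hQprime : ∀ p ∈ Q, Nat.Prime p := fun p hp => Nat.prime_of_mem_primeFactors hp
  set B := ∑ p ∈ Q, Nat.log 2 p with hB
  set t := Nat.log 2 B with ht
  have hWm' := hWm Q hQprime
  have hW0' := hW0 Q hQprime
  rw [← hB, ← ht] at hWm' hW0'
  simp only [pow_zero, mul_one] at hW0'
  -- basic prime facts
  have hjp1 : ∀ p ∈ Q, 1 ≤ Nat.log 2 p := by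
    intro p hp
    have h2p : 2 ^ 1 ≤ p := by simpa using (hQprime p hp).two_le
    exact (Nat.le_log_iff_pow_le one_lt_two (hQprime p hp).pos.ne').2 h2p
  -- pointwise bounds for U and V
  have hpc : ∀ p ∈ Q, (p:ℝ)^(2/(m:ℝ)-1) ≤ (2:ℝ)^((2/(m:ℝ) - 1) * (Nat.log 2 p : ℝ)) := by
    intro p hp
    have h1 : (2:ℕ)^(Nat.log 2 p) ≤ p := Nat.pow_log_le_self 2 (hQprime p hp).pos.ne'
    have hcneg : 2/(m:ℝ) - 1 ≤ 0 := by
      rw [sub_nonpos, div_le_one hm0]; linarith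
    have h2 : (p:ℝ)^(2/(m:ℝ)-1) ≤ (((2:ℕ)^(Nat.log 2 p) : ℕ):ℝ)^(2/(m:ℝ)-1) :=
      Real.rpow_le_rpow_of_nonpos (by positivity) (by exact_mod_cast h1) hcneg
    calc (p:ℝ)^(2/(m:ℝ)-1) ≤ (((2:ℕ)^(Nat.log 2 p) : ℕ):ℝ)^(2/(m:ℝ)-1) := h2
      _ = (2:ℝ)^((2/(m:ℝ) - 1) * (Nat.log 2 p : ℝ)) := by
          push_cast
          rw [← Real.rpow_natCast 2 (Nat.log 2 p), ← Real.rpow_mul (by norm_num)]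
          ring_nf
  have hlogp : ∀ p ∈ Q, Real.log p ≤ ((Nat.log 2 p : ℝ) + 1) := by
    intro p hp
    have h1 : p < 2^(Nat.log 2 p + 1) := Nat.lt_pow_succ_log_self one_lt_two p
    have h2 : Real.log p ≤ Real.log (((2:ℕ)^(Nat.log 2 p + 1) : ℕ):ℝ) := by
      apply Real.log_le_log (by exact_mod_cast (hQprime p hp).pos)
      exact_mod_cast h1.le
    have h3 : Real.log (((2:ℕ)^(Nat.log 2 p + 1) : ℕ):ℝ)
        = ((Nat.log 2 p : ℝ) + 1) * Real.log 2 := by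
      push_cast
      rw [Real.log_pow]
      push_cast; ring
    have h4 : Real.log 2 ≤ 1 := by
      have := Real.log_le_sub_one_of_pos (two_pos (α := ℝ))
      linarith
    have h5 : (0:ℝ) ≤ (Nat.log 2 p : ℝ) + 1 := by positivity
    calc Real.log p ≤ ((Nat.log 2 p : ℝ) + 1) * Real.log 2 := h3 ▸ h2
      _ ≤ ((Nat.log 2 p : ℝ) + 1) * 1 := by
          exact mul_le_mul_of_nonneg_left h4 h5
      _ = (Nat.log 2 p : ℝ) + 1 := mul_one _
  have hUb : (∑ p ∈ Q, Real.log p ^ m * (p:ℝ)^(2/(m:ℝ)-1))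
      ≤ ∑ p ∈ Q, (2:ℝ) ^ ((2/(m:ℝ) - 1) * (Nat.log 2 p : ℝ)) * ((Nat.log 2 p : ℝ) + 1) ^ m := by
    apply Finset.sum_le_sum
    intro p hp
    have hlognn : 0 ≤ Real.log p := Real.log_natCast_nonneg p
    calc Real.log p ^ m * (p:ℝ)^(2/(m:ℝ)-1)
        ≤ ((Nat.log 2 p : ℝ) + 1) ^ m * (2:ℝ) ^ ((2/(m:ℝ) - 1) * (Nat.log 2 p : ℝ)) := by
          apply mul_le_mul (pow_le_pow_left₀ hlognn (hlogp p hp) m) (hpc p hp)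
            (Real.rpow_nonneg (Nat.cast_nonneg p) _) (by positivity)
      _ = (2:ℝ) ^ ((2/(m:ℝ) - 1) * (Nat.log 2 p : ℝ)) * ((Nat.log 2 p : ℝ) + 1) ^ m :=
          mul_comm _ _
  have hVb : (∑ p ∈ Q, (p:ℝ)^(2/(m:ℝ)-1))
      ≤ ∑ p ∈ Q, (2:ℝ) ^ ((2/(m:ℝ) - 1) * (Nat.log 2 p : ℝ)) :=
    Finset.sum_le_sum (fun p hp => hpc p hp)
  -- nonnegativity of the sums
  have hUm0 : (0:ℝ) ≤ ∑ p ∈ Q, (2:ℝ) ^ ((2/(m:ℝ) - 1) * (Nat.log 2 p : ℝ)) * ((Nat.log 2 p : ℝ) + 1) ^ m :=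
    Finset.sum_nonneg fun p _ => mul_nonneg (Real.rpow_nonneg (by norm_num) _) (by positivity)
  have hV0 : (0:ℝ) ≤ ∑ p ∈ Q, (p:ℝ)^(2/(m:ℝ)-1) :=
    Finset.sum_nonneg fun p _ => Real.rpow_nonneg (Nat.cast_nonneg p) _
  have hV00 : (0:ℝ) ≤ ∑ p ∈ Q, (2:ℝ) ^ ((2/(m:ℝ) - 1) * (Nat.log 2 p : ℝ)) :=
    Finset.sum_nonneg fun p _ => Real.rpow_nonneg (by norm_num) _
  have hU0 : (0:ℝ) ≤ ∑ p ∈ Q, Real.log p ^ m * (p:ℝ)^(2/(m:ℝ)-1) :=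
    Finset.sum_nonneg fun p _ => mul_nonneg (pow_nonneg (Real.log_natCast_nonneg p) m)
      (Real.rpow_nonneg (Nat.cast_nonneg p) _)
  -- B and t facts
  have hB1 : 1 ≤ B := by
    obtain ⟨p, hp⟩ := Nat.nonempty_primeFactors.2 (by omega : 1 < n)
    calc 1 ≤ Nat.log 2 p := hjp1 p hp
      _ ≤ B := Finset.single_le_sum (f := fun p => Nat.log 2 p) (fun q _ => Nat.zero_le _) hp
  have h2tB : ((2:ℝ))^((t:ℝ)) ≤ (B:ℝ) := by
    have := Nat.pow_log_le_self 2 (by omega : B ≠ 0)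
    rw [← ht] at this
    calc (2:ℝ)^((t:ℝ)) = (((2:ℕ)^t : ℕ):ℝ) := by
          push_cast; rw [Real.rpow_natCast]
      _ ≤ (B:ℝ) := by exact_mod_cast this
  have hBlogn : (B:ℝ) * Real.log 2 ≤ Real.log n := by
    have h1 : (2:ℕ)^B ≤ n := by
      calc (2:ℕ)^B = ∏ p ∈ Q, 2^(Nat.log 2 p) := (Finset.prod_pow_eq_pow_sum Q _ 2).symm
        _ ≤ ∏ p ∈ Q, p := Finset.prod_le_prod' fun p hp =>
            Nat.pow_log_le_self 2 (hQprime p hp).pos.ne'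
        _ ≤ n := Nat.le_of_dvd (by omega) (Nat.prod_primeFactors_dvd n)
    have h2 : Real.log (((2:ℕ)^B : ℕ):ℝ) ≤ Real.log n := by
      apply Real.log_le_log (by positivity)
      exact_mod_cast h1
    calc (B:ℝ) * Real.log 2 = Real.log (((2:ℕ)^B : ℕ):ℝ) := by
          push_cast; rw [Real.log_pow]
      _ ≤ Real.log n := h2
  have hBle : (B:ℝ) ≤ Real.log n / Real.log 2 := by
    rw [le_div_iff₀ hlog2]; exact hBlogn
  -- main multiplication
  have hkey : (∑ p ∈ Q, (2:ℝ) ^ ((2/(m:ℝ) - 1) * (Nat.log 2 p : ℝ)) * ((Nat.log 2 p : ℝ) + 1) ^ m) *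
      (∑ p ∈ Q, (2:ℝ) ^ ((2/(m:ℝ) - 1) * (Nat.log 2 p : ℝ)))^(m-1)
      ≤ Km * K0^(m-1) * (2:ℝ)^(2*(t:ℝ)) := by
    have hT1 : (0:ℝ) < ((t:ℝ)+1) := by positivity
    have hprodle : (((t:ℝ)+1) * ∑ p ∈ Q, (2:ℝ) ^ ((2/(m:ℝ) - 1) * (Nat.log 2 p : ℝ)) * ((Nat.log 2 p : ℝ) + 1) ^ m) *
        (((t:ℝ)+1) * ∑ p ∈ Q, (2:ℝ) ^ ((2/(m:ℝ) - 1) * (Nat.log 2 p : ℝ)))^(m-1)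
        ≤ (Km * ((2:ℝ)^((2/(m:ℝ))*(t:ℝ)) * ((t:ℝ)+1)^m)) * (K0 * (2:ℝ)^((2/(m:ℝ))*(t:ℝ)))^(m-1) := by
      apply mul_le_mul hWm'
      · apply pow_le_pow_left₀ (mul_nonneg hT1.le hV00) hW0'
      · apply pow_nonneg (mul_nonneg hT1.le hV00)
      · positivity
    -- rewrite both sides
    have hLHS : (((t:ℝ)+1) * ∑ p ∈ Q, (2:ℝ) ^ ((2/(m:ℝ) - 1) * (Nat.log 2 p : ℝ)) * ((Nat.log 2 p : ℝ) + 1) ^ m) *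
        (((t:ℝ)+1) * ∑ p ∈ Q, (2:ℝ) ^ ((2/(m:ℝ) - 1) * (Nat.log 2 p : ℝ)))^(m-1)
        = ((t:ℝ)+1)^m * ((∑ p ∈ Q, (2:ℝ) ^ ((2/(m:ℝ) - 1) * (Nat.log 2 p : ℝ)) * ((Nat.log 2 p : ℝ) + 1) ^ m) *
          (∑ p ∈ Q, (2:ℝ) ^ ((2/(m:ℝ) - 1) * (Nat.log 2 p : ℝ)))^(m-1)) := by
      rw [mul_pow]
      have : ((t:ℝ)+1) * ((t:ℝ)+1)^(m-1) = ((t:ℝ)+1)^m := by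
        rw [← pow_succ', Nat.sub_add_cancel (by omega : 1 ≤ m)]
      calc _ = (((t:ℝ)+1) * ((t:ℝ)+1)^(m-1)) * ((∑ p ∈ Q, (2:ℝ) ^ ((2/(m:ℝ) - 1) * (Nat.log 2 p : ℝ)) * ((Nat.log 2 p : ℝ) + 1) ^ m) *
          (∑ p ∈ Q, (2:ℝ) ^ ((2/(m:ℝ) - 1) * (Nat.log 2 p : ℝ)))^(m-1)) := by ring
        _ = _ := by rw [this]
    have hRHS : (Km * ((2:ℝ)^((2/(m:ℝ))*(t:ℝ)) * ((t:ℝ)+1)^m)) * (K0 * (2:ℝ)^((2/(m:ℝ))*(t:ℝ)))^(m-1)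
        = ((t:ℝ)+1)^m * (Km * K0^(m-1) * (2:ℝ)^(2*(t:ℝ))) := by
      rw [mul_pow]
      have hpow : (2:ℝ)^((2/(m:ℝ))*(t:ℝ)) * ((2:ℝ)^((2/(m:ℝ))*(t:ℝ)))^(m-1) = (2:ℝ)^(2*(t:ℝ)) := by
        rw [← Real.rpow_natCast ((2:ℝ)^((2/(m:ℝ))*(t:ℝ))) (m-1), ← Real.rpow_mul (by norm_num),
          ← Real.rpow_add two_pos]
        congr 1
        have hcast : ((m-1 : ℕ):ℝ) = (m:ℝ) - 1 := by
          rw [Nat.cast_sub (by omega : 1 ≤ m)]; norm_num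
        rw [hcast]
        field_simp
        ring
      calc _ = (((2:ℝ)^((2/(m:ℝ))*(t:ℝ)) * ((2:ℝ)^((2/(m:ℝ))*(t:ℝ)))^(m-1)) * (Km * K0^(m-1))) * ((t:ℝ)+1)^m := by ring
        _ = _ := by rw [hpow]; ring
    rw [hLHS, hRHS] at hprodle
    exact le_of_mul_le_mul_left hprodle (by positivity)
  -- final chain
  calc ∑ k ∈ n.divisors.filter (fun k => k.primeFactorsList.length = m),
        (k : ℝ) ^ (2 / (m : ℝ) - 1) * Real.log k ^ m
      ≤ (m:ℝ)^m * ((∑ p ∈ Q, Real.log p ^ m * (p:ℝ)^(2/(m:ℝ)-1)) *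
          (∑ p ∈ Q, (p:ℝ)^(2/(m:ℝ)-1)) ^ (m-1)) := aux_partI m hm n hn
    _ ≤ (m:ℝ)^m * ((∑ p ∈ Q, (2:ℝ) ^ ((2/(m:ℝ) - 1) * (Nat.log 2 p : ℝ)) * ((Nat.log 2 p : ℝ) + 1) ^ m) *
          (∑ p ∈ Q, (2:ℝ) ^ ((2/(m:ℝ) - 1) * (Nat.log 2 p : ℝ)))^(m-1)) := by
        apply mul_le_mul_of_nonneg_left _ (by positivity)
        apply mul_le_mul hUb (pow_le_pow_left₀ hV0 hVb (m-1)) (pow_nonneg hV0 _) hUm0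
    _ ≤ (m:ℝ)^m * (Km * K0^(m-1) * (2:ℝ)^(2*(t:ℝ))) := by
        apply mul_le_mul_of_nonneg_left hkey (by positivity)
    _ ≤ (m:ℝ)^m * (Km * K0^(m-1) * (Real.log n / Real.log 2)^2) := by
        apply mul_le_mul_of_nonneg_left _ (by positivity)
        apply mul_le_mul_of_nonneg_left _ (by positivity)
        have h1 : (2:ℝ)^(2*(t:ℝ)) = ((2:ℝ)^((t:ℝ)))^2 := by
          rw [← Real.rpow_natCast ((2:ℝ)^((t:ℝ))) 2, ← Real.rpow_mul (by norm_num)]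
          norm_num
          ring_nf
        rw [h1]
        apply pow_le_pow_left₀ (Real.rpow_nonneg (by norm_num) _)
        calc (2:ℝ)^((t:ℝ)) ≤ (B:ℝ) := h2tB
          _ ≤ Real.log n / Real.log 2 := hBle
    _ = (m:ℝ)^m * (Km * K0^(m-1)) / (Real.log 2)^2 * Real.log n ^ 2 := by
        rw [div_pow]
        ring
end

section
/- Let 𝒩 ⊂ {2, 3, 4, …} be a set of integers that are pairwise coprime, i.e. gcd(m, n) = 1 whenever m, n ∈ 𝒩 and m ≠ n, and let (b_n)_{n∈𝒩} be complex numbers with ∑_{n∈𝒩} |b_n|² < ∞. Then the operator norm of the Volterra operator T_g with symbol g(s) = ∑_{n∈𝒩} b_n n^{-s} on H² equals ‖g‖_{H²}: the supremum of ∑_{N≥2} (log N)^{-2} |∑_{n∈𝒩, n∣N} b_n (log n) a_{N/n}|² over all complex sequences (a_j)_{j≥1} with ∑_{j≥1}|a_j|² ≤ 1 is exactly ∑_{n∈𝒩} |b_n|². -/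
open scoped ENNReal

private lemma nat_prod_dvd_of_coprime {s : Finset ℕ} {N : ℕ}
    (hc : ∀ m ∈ s, ∀ n ∈ s, m ≠ n → Nat.Coprime m n)
    (hd : ∀ m ∈ s, m ∣ N) : (∏ d ∈ s, d) ∣ N := by
  induction s using Finset.induction with
  | empty => simp
  | @insert x s0 hx ih =>
    rw [Finset.prod_insert hx]
    have hcop : Nat.Coprime x (∏ d ∈ s0, d) :=
      Nat.Coprime.prod_right fun i hi =>
        hc x (by simp) i (by simp [hi]) (fun h => hx (h ▸ hi))
    exact hcop.mul_dvd_of_dvd_of_dvd (hd x (by simp))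
      (ih (fun m hm n hn hmn => hc m (by simp [hm]) n (by simp [hn]) hmn)
          (fun m hm => hd m (by simp [hm])))

private lemma volterra_CS (N : ℕ) (hN : 2 ≤ N) (b a : ℕ → ℂ) (𝒩 : Set ℕ)
    (h2 : ∀ n ∈ 𝒩, 2 ≤ n)
    (hcop : ∀ m ∈ 𝒩, ∀ n ∈ 𝒩, m ≠ n → Nat.Coprime m n)
    (hsupp : ∀ n, b n ≠ 0 → n ∈ 𝒩) :
    ‖∑ d ∈ N.divisors, b d * (Real.log d : ℂ) * a (N / d)‖ ^ 2 / Real.log N ^ 2 ≤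
      ∑ d ∈ N.divisors.filter (fun d => b d ≠ 0),
        ‖b d‖ ^ 2 * Real.log d * ‖a (N / d)‖ ^ 2 / Real.log N := by
  classical
  set s := N.divisors.filter (fun d => b d ≠ 0) with hs
  have hNpos : (0:ℕ) < N := by omega
  have hlogN : 0 < Real.log N := Real.log_pos (by exact_mod_cast hN)
  have hmem : ∀ d ∈ s, 2 ≤ d ∧ d ∣ N ∧ b d ≠ 0 := by
    intro d hd
    rw [hs, Finset.mem_filter, Nat.mem_divisors] at hd
    exact ⟨h2 d (hsupp d hd.2), hd.1.1, hd.2⟩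
  have hlogd : ∀ d ∈ s, 0 ≤ Real.log d := fun d hd =>
    Real.log_nonneg (by exact_mod_cast Nat.one_le_iff_ne_zero.mpr (by have := (hmem d hd).1; omega))
  have hsum : ∑ d ∈ N.divisors, b d * (Real.log d : ℂ) * a (N / d)
      = ∑ d ∈ s, b d * (Real.log d : ℂ) * a (N / d) := by
    rw [hs]
    refine (Finset.sum_filter_of_ne ?_).symm
    intro x _ hx hbx
    exact hx (by simp [hbx])
  have htri : ‖∑ d ∈ s, b d * (Real.log d : ℂ) * a (N / d)‖ ≤
      ∑ d ∈ s, ‖b d‖ * Real.log d * ‖a (N / d)‖ := by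
    refine (norm_sum_le _ _).trans_eq (Finset.sum_congr rfl fun d hd => ?_)
    rw [norm_mul, norm_mul, Complex.norm_real, Real.norm_eq_abs,
      abs_of_nonneg (hlogd d hd)]
  have hCS : (∑ d ∈ s, ‖b d‖ * Real.log d * ‖a (N / d)‖) ^ 2 ≤
      (∑ d ∈ s, Real.log d) * ∑ d ∈ s, ‖b d‖ ^ 2 * Real.log d * ‖a (N / d)‖ ^ 2 := by
    have := Finset.sum_mul_sq_le_sq_mul_sq s (fun d => Real.sqrt (Real.log d))
      (fun d => ‖b d‖ * Real.sqrt (Real.log d) * ‖a (N / d)‖)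
    calc (∑ d ∈ s, ‖b d‖ * Real.log d * ‖a (N / d)‖) ^ 2
        = (∑ d ∈ s, Real.sqrt (Real.log d) *
            (‖b d‖ * Real.sqrt (Real.log d) * ‖a (N / d)‖)) ^ 2 := by
          congr 1
          refine Finset.sum_congr rfl fun d hd => ?_
          rw [show Real.sqrt (Real.log d) * (‖b d‖ * Real.sqrt (Real.log d) * ‖a (N / d)‖)
            = ‖b d‖ * (Real.sqrt (Real.log d) * Real.sqrt (Real.log d)) * ‖a (N / d)‖ by ring,
            Real.mul_self_sqrt (hlogd d hd)]
      _ ≤ (∑ d ∈ s, Real.sqrt (Real.log d) ^ 2) *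
            ∑ d ∈ s, (‖b d‖ * Real.sqrt (Real.log d) * ‖a (N / d)‖) ^ 2 := this
      _ = (∑ d ∈ s, Real.log d) * ∑ d ∈ s, ‖b d‖ ^ 2 * Real.log d * ‖a (N / d)‖ ^ 2 := by
          congr 1
          · exact Finset.sum_congr rfl fun d hd => Real.sq_sqrt (hlogd d hd)
          · refine Finset.sum_congr rfl fun d hd => ?_
            rw [mul_pow, mul_pow, Real.sq_sqrt (hlogd d hd)]
  have hlogsum : (∑ d ∈ s, Real.log d) ≤ Real.log N := by
    have hdvd : (∏ d ∈ s, d) ∣ N := nat_prod_dvd_of_coprime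
      (fun m hm n hn hmn => hcop m (hsupp m (hmem m hm).2.2) n (hsupp n (hmem n hn).2.2) hmn)
      (fun m hm => (hmem m hm).2.1)
    have hprodpos : 0 < ∏ d ∈ s, d := Finset.prod_pos fun d hd => by have := (hmem d hd).1; omega
    calc (∑ d ∈ s, Real.log d) = Real.log (∏ d ∈ s, (d:ℝ)) := by
          rw [Real.log_prod]
          intro d hd
          have := (hmem d hd).1; positivity
      _ ≤ Real.log N := by
          rw [show (∏ d ∈ s, (d:ℝ)) = ((∏ d ∈ s, d : ℕ) : ℝ) by push_cast; ring]
          exact Real.log_le_log (by exact_mod_cast hprodpos)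
            (by exact_mod_cast Nat.le_of_dvd hNpos hdvd)
  have hQnn : 0 ≤ ∑ d ∈ s, ‖b d‖ ^ 2 * Real.log d * ‖a (N / d)‖ ^ 2 :=
    Finset.sum_nonneg fun d hd => by
      have := hlogd d hd; positivity
  rw [hsum, ← Finset.sum_div]
  rw [div_le_div_iff₀ (by positivity) hlogN]
  calc ‖∑ d ∈ s, b d * (Real.log d : ℂ) * a (N / d)‖ ^ 2 * Real.log N
      ≤ (∑ d ∈ s, ‖b d‖ * Real.log d * ‖a (N / d)‖) ^ 2 * Real.log N := by
        refine mul_le_mul_of_nonneg_right ?_ hlogN.le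
        exact pow_le_pow_left₀ (norm_nonneg _) htri 2
    _ ≤ ((∑ d ∈ s, Real.log d) * ∑ d ∈ s, ‖b d‖ ^ 2 * Real.log d * ‖a (N / d)‖ ^ 2)
          * Real.log N := mul_le_mul_of_nonneg_right hCS hlogN.le
    _ ≤ (Real.log N * ∑ d ∈ s, ‖b d‖ ^ 2 * Real.log d * ‖a (N / d)‖ ^ 2) * Real.log N := by
        refine mul_le_mul_of_nonneg_right (mul_le_mul_of_nonneg_right hlogsum hQnn) hlogN.le
    _ = (∑ d ∈ s, ‖b d‖ ^ 2 * Real.log d * ‖a (N / d)‖ ^ 2) * Real.log N ^ 2 := by ring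

/-- for a symbol `g(s) = ∑_{n∈𝒩} b_n n^{-s}` supported on a set `𝒩` of
pairwise coprime integers `≥ 2`, with `∑_{n∈𝒩}|b_n|² < ∞`, the operator norm of the
Volterra operator on `H²` equals `‖g‖_{H²}`: the supremum of
`∑_{N≥2} (log N)^{-2}|∑_{n∈𝒩, n∣N} b_n (log n) a_{N/n}|²` over the unit ball
`∑_{j≥1}|a_j|² ≤ 1` is exactly `∑_{n∈𝒩} |b_n|²`. -/
theorem volterra_coprime_symbol_norm (𝒩 : Set ℕ) (h2 : ∀ n ∈ 𝒩, 2 ≤ n)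
    (hcop : ∀ m ∈ 𝒩, ∀ n ∈ 𝒩, m ≠ n → Nat.Coprime m n)
    (b : ℕ → ℂ) (hsupp : ∀ n, b n ≠ 0 → n ∈ 𝒩)
    (hb : (∑' n : ℕ, ENNReal.ofReal (‖b n‖ ^ 2)) ≠ ⊤) :
    (⨆ a ∈ {a : ℕ → ℂ |
        (∑' n : ℕ, if 1 ≤ n then ENNReal.ofReal (‖a n‖ ^ 2) else 0) ≤ 1},
      ∑' N : ℕ, (if 2 ≤ N then
          ENNReal.ofReal
            (‖∑ d ∈ N.divisors, b d * (Real.log d : ℂ) * a (N / d)‖ ^ 2 /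
              Real.log N ^ 2)
        else 0))
    = ∑' n : ℕ, ENNReal.ofReal (‖b n‖ ^ 2) := by
  classical
  have hb2 : ∀ n < 2, b n = 0 := by
    intro n hn
    by_contra h
    have := h2 n (hsupp n h)
    omega
  refine le_antisymm ?_ ?_
  · -- upper bound
    refine iSup₂_le fun a ha => ?_
    rw [Set.mem_setOf_eq] at ha
    set F : ℕ → ℕ → ℝ≥0∞ := fun d N =>
      if d ∣ N ∧ 2 ≤ N ∧ b d ≠ 0 then
        ENNReal.ofReal (‖b d‖ ^ 2 * Real.log d * ‖a (N / d)‖ ^ 2 / Real.log N) else 0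
      with hF
    have stepA : ∀ N : ℕ, (if 2 ≤ N then ENNReal.ofReal
          (‖∑ d ∈ N.divisors, b d * (Real.log d : ℂ) * a (N / d)‖ ^ 2 / Real.log N ^ 2)
        else 0) ≤ ∑' d : ℕ, F d N := by
      intro N
      by_cases hN : 2 ≤ N
      · rw [if_pos hN]
        set s := N.divisors.filter (fun d => b d ≠ 0) with hs
        have hts : ∑' d : ℕ, F d N = ∑ d ∈ s, F d N := by
          refine tsum_eq_sum fun d hd => ?_
          rw [hF]
          simp only
          rw [if_neg]
          intro ⟨h1, _, h3⟩
          exact hd (by rw [hs]; simp [Nat.mem_divisors, h1, h3]; omega)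
        rw [hts]
        have hFd : ∀ d ∈ s, F d N =
            ENNReal.ofReal (‖b d‖ ^ 2 * Real.log d * ‖a (N / d)‖ ^ 2 / Real.log N) := by
          intro d hd
          rw [hs, Finset.mem_filter, Nat.mem_divisors] at hd
          rw [hF]; simp only; rw [if_pos ⟨hd.1.1, hN, hd.2⟩]
        rw [Finset.sum_congr rfl hFd]
        have hlogN : 0 < Real.log N := Real.log_pos (by exact_mod_cast hN)
        rw [← ENNReal.ofReal_sum_of_nonneg (fun d hd => ?_)]
        · exact ENNReal.ofReal_le_ofReal (volterra_CS N hN b a 𝒩 h2 hcop hsupp)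
        · have : 0 ≤ Real.log d := Real.log_nonneg (by
            rw [hs, Finset.mem_filter, Nat.mem_divisors] at hd
            have := h2 d (hsupp d hd.2)
            exact_mod_cast by omega)
          positivity
      · rw [if_neg hN]; exact zero_le
    have stepC : ∀ d : ℕ, (∑' N : ℕ, F d N) ≤ ENNReal.ofReal (‖b d‖ ^ 2) := by
      intro d
      by_cases hbd : b d = 0
      · have : ∀ N, F d N = 0 := by
          intro N; rw [hF]; simp [hbd]
        simp [this]
      · have hd2 : 2 ≤ d := h2 d (hsupp d hbd)
        have hdpos : 0 < d := by omega
        have hinj : Function.Injective (fun m : ℕ => d * m) :=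
          fun x y hxy => Nat.eq_of_mul_eq_mul_left hdpos hxy
        have hre : ∑' N : ℕ, F d N = ∑' m : ℕ, F d (d * m) := by
          refine (hinj.tsum_eq ?_).symm
          intro N hN
          rw [Function.mem_support, hF] at hN
          simp only at hN
          by_cases hdy : d ∣ N ∧ 2 ≤ N ∧ b d ≠ 0
          · exact ⟨N / d, (Nat.mul_div_cancel' hdy.1)⟩
          · exact absurd (if_neg hdy) hN
        rw [hre]
        have hbound : ∀ m : ℕ, F d (d * m) ≤
            ENNReal.ofReal (‖b d‖ ^ 2) * (if 1 ≤ m then ENNReal.ofReal (‖a m‖ ^ 2) else 0) := by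
          intro m
          rcases Nat.eq_zero_or_pos m with hm | hm
          · subst hm
            rw [hF]; simp
          · have h1m : 1 ≤ m := hm
            have hcond : d ∣ d * m ∧ 2 ≤ d * m ∧ b d ≠ 0 :=
              ⟨Dvd.intro m rfl, le_trans hd2 (Nat.le_mul_of_pos_right d hm), hbd⟩
            rw [hF]
            simp only
            rw [if_pos hcond, if_pos h1m, Nat.mul_div_cancel_left m hdpos]
            rw [← ENNReal.ofReal_mul (by positivity)]
            refine ENNReal.ofReal_le_ofReal ?_
            have hlogd : 0 < Real.log d := Real.log_pos (by exact_mod_cast hd2)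
            have hlogdm : Real.log d ≤ Real.log (↑(d * m)) := by
              refine Real.log_le_log (by exact_mod_cast hdpos) ?_
              exact_mod_cast Nat.le_mul_of_pos_right d hm
            have hlogdm' : 0 < Real.log (↑(d * m)) := lt_of_lt_of_le hlogd hlogdm
            rw [div_le_iff₀ hlogdm']
            calc ‖b d‖ ^ 2 * Real.log d * ‖a m‖ ^ 2
                = (‖b d‖ ^ 2 * ‖a m‖ ^ 2) * Real.log d := by ring
              _ ≤ (‖b d‖ ^ 2 * ‖a m‖ ^ 2) * Real.log (↑(d * m)) := by
                  refine mul_le_mul_of_nonneg_left hlogdm (by positivity)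
        calc (∑' m : ℕ, F d (d * m)) ≤
            ∑' m : ℕ, ENNReal.ofReal (‖b d‖ ^ 2) *
              (if 1 ≤ m then ENNReal.ofReal (‖a m‖ ^ 2) else 0) := Summable.tsum_le_tsum hbound
              ENNReal.summable ENNReal.summable
          _ = ENNReal.ofReal (‖b d‖ ^ 2) *
              ∑' m : ℕ, (if 1 ≤ m then ENNReal.ofReal (‖a m‖ ^ 2) else 0) :=
              ENNReal.tsum_mul_left
          _ ≤ ENNReal.ofReal (‖b d‖ ^ 2) * 1 := mul_le_mul_right ha _
          _ = ENNReal.ofReal (‖b d‖ ^ 2) := mul_one _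
    calc (∑' N : ℕ, (if 2 ≤ N then ENNReal.ofReal
            (‖∑ d ∈ N.divisors, b d * (Real.log d : ℂ) * a (N / d)‖ ^ 2 / Real.log N ^ 2)
          else 0))
        ≤ ∑' N : ℕ, ∑' d : ℕ, F d N := Summable.tsum_le_tsum stepA ENNReal.summable ENNReal.summable
      _ = ∑' d : ℕ, ∑' N : ℕ, F d N := ENNReal.tsum_comm
      _ ≤ ∑' d : ℕ, ENNReal.ofReal (‖b d‖ ^ 2) :=
          Summable.tsum_le_tsum stepC ENNReal.summable ENNReal.summable
  · -- lower bound
    set a₀ : ℕ → ℂ := fun n => if n = 1 then 1 else 0 with ha₀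
    have hmem : a₀ ∈ {a : ℕ → ℂ |
        (∑' n : ℕ, if 1 ≤ n then ENNReal.ofReal (‖a n‖ ^ 2) else 0) ≤ 1} := by
      rw [Set.mem_setOf_eq]
      have : (∑' n : ℕ, if 1 ≤ n then ENNReal.ofReal (‖a₀ n‖ ^ 2) else 0) = 1 := by
        rw [tsum_eq_single 1 (fun n hn => ?_)]
        · simp [ha₀]
        · simp [ha₀, hn]
      exact this.le
    have hval : (∑' N : ℕ, (if 2 ≤ N then
          ENNReal.ofReal
            (‖∑ d ∈ N.divisors, b d * (Real.log d : ℂ) * a₀ (N / d)‖ ^ 2 /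
              Real.log N ^ 2)
        else 0)) = ∑' n : ℕ, ENNReal.ofReal (‖b n‖ ^ 2) := by
      refine tsum_congr fun N => ?_
      by_cases hN : 2 ≤ N
      · rw [if_pos hN]
        have hNpos : (0:ℕ) < N := by omega
        have hlogN : 0 < Real.log N := Real.log_pos (by exact_mod_cast hN)
        have hinner : ∑ d ∈ N.divisors, b d * (Real.log d : ℂ) * a₀ (N / d)
            = b N * (Real.log N : ℂ) := by
          rw [Finset.sum_eq_single N]
          · rw [ha₀, Nat.div_self hNpos]; simp
          · intro d hd hdN
            rw [Nat.mem_divisors] at hd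
            have : N / d ≠ 1 := by
              intro h
              apply hdN
              have := Nat.div_mul_cancel hd.1
              rw [h, one_mul] at this
              exact this
            rw [ha₀]; simp [this]
          · intro h
            exact absurd (Nat.mem_divisors_self N (by omega)) h
        rw [hinner]
        congr 1
        rw [norm_mul, Complex.norm_real, Real.norm_eq_abs, abs_of_nonneg hlogN.le,
          mul_pow, mul_div_assoc, div_self (by positivity), mul_one]
      · rw [if_neg hN, hb2 N (by omega)]
        simp
    calc (∑' n : ℕ, ENNReal.ofReal (‖b n‖ ^ 2)) = _ := hval.symm
      _ ≤ _ := le_iSup₂_of_le a₀ hmem le_rfl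
end

section
/- Let (b_n)_{n≥2} be a complex sequence (with b_1 = 0) and C > 0 a constant such that for every square-summable complex sequence (a_n)_{n≥1}, ∑_{N≥2} (log N)^{-2} |∑_{d∣N, d≥2} b_d (log d) a_{N/d}|² ≤ C² ∑_{n≥1} |a_n|² (i.e. the Volterra operator T_g with symbol g(s)=∑_{n≥2} b_n n^{-s} is bounded on H² with norm at most C). Define the Dirichlet convolution powers by b^{(1)} = b and b^{(k+1)}_N = ∑_{d∣N} b^{(k)}_d b_{N/d}. Then for every positive integer k, ∑_{N≥1} |b^{(k)}_N|² ≤ (k!)² C^{2k}; that is, ‖g^k‖_{H²} ≤ k! ‖T_g‖^k. -/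
open scoped ENNReal

/-- Dirichlet convolution powers: `convPow b k` is the coefficient sequence of `g^k`, where
`g` is the Dirichlet series with coefficients `b` (so `convPow b 0` is the unit `1`,
`convPow b 1 = b`, and `convPow b (k+1) N = ∑_{d∣N} b_d (convPow b k)_{N/d}`). -/
noncomputable def convPow (b : ℕ → ℂ) : ℕ → ℕ → ℂ
  | 0, N => if N = 1 then 1 else 0
  | k + 1, N => ∑ d ∈ N.divisors, convPow b k d * b (N / d)

open ArithmeticFunction Finset

/-- The arithmetic function with values `b`. -/
noncomputable def bAF (b : ℕ → ℂ) : ArithmeticFunction ℂ :=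
  ⟨fun n => if n = 0 then 0 else b n, by simp⟩

/-- `log` as a complex arithmetic function. -/
noncomputable def logAF : ArithmeticFunction ℂ := ⟨fun n => (Real.log n : ℂ), by simp⟩

lemma logAF_apply (n : ℕ) : logAF n = (Real.log n : ℂ) := rfl

lemma pmul_log_mul (f g : ArithmeticFunction ℂ) :
    logAF.pmul (f * g) = logAF.pmul f * g + f * logAF.pmul g := by
  ext n
  rw [ArithmeticFunction.add_apply, pmul_apply, mul_apply, mul_apply, mul_apply, Finset.mul_sum,
    ← Finset.sum_add_distrib]
  refine Finset.sum_congr rfl fun p hp => ?_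
  obtain ⟨hpn, hn0⟩ := Nat.mem_divisorsAntidiagonal.mp hp
  have h1 : p.1 ≠ 0 := Nat.left_ne_zero_of_mem_divisorsAntidiagonal hp
  have h2 : p.2 ≠ 0 := Nat.right_ne_zero_of_mem_divisorsAntidiagonal hp
  rw [pmul_apply, pmul_apply, logAF_apply, logAF_apply, logAF_apply, ← hpn]
  push_cast
  rw [Real.log_mul (by exact_mod_cast h1) (by exact_mod_cast h2)]
  push_cast
  ring

lemma pmul_log_pow (f : ArithmeticFunction ℂ) (k : ℕ) :
    logAF.pmul (f ^ (k + 1)) = (k + 1) • (logAF.pmul f * f ^ k) := by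
  induction k with
  | zero => simp
  | succ k ih =>
    rw [pow_succ, pmul_log_mul, ih, pow_succ]
    simp only [nsmul_eq_mul]
    push_cast
    ring

lemma convPow_eq (b : ℕ → ℂ) (k : ℕ) (n : ℕ) : convPow b k n = (bAF b ^ k) n := by
  induction k generalizing n with
  | zero => simp [convPow, pow_zero, one_apply]
  | succ k ih =>
    rw [convPow, pow_succ, mul_apply,
      Nat.sum_divisorsAntidiagonal (fun d e => (bAF b ^ k) d * bAF b e)]
    refine Finset.sum_congr rfl fun p hp => ?_
    obtain ⟨hd, hn0⟩ := Nat.mem_divisors.mp hp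
    have hp0 : p ≠ 0 := by rintro rfl; exact hn0 (Nat.eq_zero_of_zero_dvd hd)
    have hq0 : n / p ≠ 0 :=
      (Nat.div_pos (Nat.le_of_dvd (Nat.pos_of_ne_zero hn0) hd) (Nat.pos_of_ne_zero hp0)).ne'
    rw [ih]
    congr 1
    simp [bAF, hq0]

lemma key_identity (b : ℕ → ℂ) (k N : ℕ) (hN : N ≠ 0) :
    (Real.log N : ℂ) * convPow b (k + 1) N
      = (k + 1) * ∑ d ∈ N.divisors, b d * (Real.log d : ℂ) * convPow b k (N / d) := by
  have hsm : ∀ (m : ℕ) (f : ArithmeticFunction ℂ) (n : ℕ), (m • f) n = (m : ℂ) * f n := by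
    intro m f n
    induction m with
    | zero => simp
    | succ m ihm => rw [succ_nsmul, ArithmeticFunction.add_apply, ihm]; push_cast; ring
  have h := congrArg (fun f : ArithmeticFunction ℂ => f N) (pmul_log_pow (bAF b) k)
  simp only [pmul_apply] at h
  rw [hsm] at h
  push_cast at h
  rw [convPow_eq b (k + 1) N, show ((Real.log N : ℂ)) = logAF N from rfl, h]
  congr 1
  rw [mul_apply, Nat.sum_divisorsAntidiagonal (fun d e => (logAF.pmul (bAF b)) d * (bAF b ^ k) e)]
  refine Finset.sum_congr rfl fun p hp => ?_
  obtain ⟨hd, _⟩ := Nat.mem_divisors.mp hp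
  rw [pmul_apply, logAF_apply, convPow_eq]
  have : bAF b p = b p := by
    have hp0 : p ≠ 0 := by rintro rfl; exact hN (Nat.eq_zero_of_zero_dvd hd)
    simp [bAF, hp0]
  rw [this]; ring

lemma filter_sum_eq (b : ℕ → ℂ) (a : ℕ → ℂ) (N : ℕ) :
    ∑ d ∈ N.divisors.filter (fun d => 2 ≤ d), b d * (Real.log d : ℂ) * a (N / d)
      = ∑ d ∈ N.divisors, b d * (Real.log d : ℂ) * a (N / d) := by
  refine Finset.sum_filter_of_ne fun d hd hne => ?_
  by_contra h
  push_neg at h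
  interval_cases d
  · simp at hd
  · simp at hne

/-- if the Volterra operator with symbol `g(s) = ∑_{n≥2} b_n n^{-s}` is bounded
on `H²` with norm at most `C`, then for every positive integer `k`,
`‖g^k‖_{H²} ≤ k! ‖T_g‖^k`, i.e. `∑_{N≥1} |b^{(k)}_N|² ≤ (k!)² C^{2k}`. -/
theorem power_trick (b : ℕ → ℂ) (hb1 : b 1 = 0) (C : ℝ) (hC : 0 < C)
    (hbound : ∀ a : ℕ → ℂ,
      (∑' N : ℕ, (if 2 ≤ N then
          ENNReal.ofReal
            (‖∑ d ∈ N.divisors.filter (fun d => 2 ≤ d),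
                b d * (Real.log d : ℂ) * a (N / d)‖ ^ 2 / Real.log N ^ 2)
        else 0))
      ≤ ENNReal.ofReal (C ^ 2) *
          ∑' n : ℕ, (if 1 ≤ n then ENNReal.ofReal (‖a n‖ ^ 2) else 0)) :
    ∀ k : ℕ, 1 ≤ k →
      (∑' N : ℕ, (if 1 ≤ N then ENNReal.ofReal (‖convPow b k N‖ ^ 2) else 0))
        ≤ ENNReal.ofReal ((k.factorial : ℝ) ^ 2 * C ^ (2 * k)) := by
  set S : ℕ → ℝ≥0∞ := fun k =>
    ∑' N : ℕ, (if 1 ≤ N then ENNReal.ofReal (‖convPow b k N‖ ^ 2) else 0) with hS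
  have hS0 : S 0 = 1 := by
    simp only [hS]
    rw [tsum_eq_single 1 (fun n hn => ?_)]
    · simp [convPow]
    · rcases Nat.lt_or_ge n 1 with h | h
      · simp [Nat.lt_one_iff.mp h]
      · have : convPow b 0 n = 0 := by simp [convPow, hn]
        simp [this, h]
  have hstep : ∀ k : ℕ,
      S (k + 1) ≤ ENNReal.ofReal (((k : ℝ) + 1) ^ 2) * (ENNReal.ofReal (C ^ 2) * S k) := by
    intro k
    have hterm : ∀ N : ℕ,
        (if 1 ≤ N then ENNReal.ofReal (‖convPow b (k + 1) N‖ ^ 2) else 0)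
          = ENNReal.ofReal (((k : ℝ) + 1) ^ 2) *
            (if 2 ≤ N then
              ENNReal.ofReal
                (‖∑ d ∈ N.divisors.filter (fun d => 2 ≤ d),
                    b d * (Real.log d : ℂ) * convPow b k (N / d)‖ ^ 2 / Real.log N ^ 2)
            else 0) := by
      intro N
      rcases Nat.lt_or_ge N 2 with hN | hN
      · interval_cases N
        · simp
        · have h1 : convPow b (k + 1) 1 = 0 := by
            simp [convPow, Nat.divisors_one, hb1]
          simp [h1]
      · have hN0 : N ≠ 0 := by omega
        have hN1 : (1 : ℝ) < (N : ℝ) := by exact_mod_cast (by omega : 1 < N)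
        have hlog : 0 < Real.log N := Real.log_pos hN1
        have hkey := key_identity b k N hN0
        rw [← filter_sum_eq b (convPow b k) N] at hkey
        set Sf := ∑ d ∈ N.divisors.filter (fun d => 2 ≤ d),
            b d * (Real.log d : ℂ) * convPow b k (N / d) with hSf
        have hnorm : Real.log N * ‖convPow b (k + 1) N‖ = ((k : ℝ) + 1) * ‖Sf‖ := by
          have := congrArg norm hkey
          rw [norm_mul, norm_mul] at this
          rw [show ‖((Real.log N : ℝ) : ℂ)‖ = Real.log N by
            rw [Complex.norm_real, Real.norm_eq_abs, abs_of_pos hlog]] at this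
          rw [show ‖((k : ℂ) + 1)‖ = (k : ℝ) + 1 by
            rw [show ((k : ℂ) + 1) = (((k : ℝ) + 1 : ℝ) : ℂ) by push_cast; ring,
              Complex.norm_real, Real.norm_eq_abs, abs_of_pos (by positivity)]] at this
          exact this
        have hsq : ‖convPow b (k + 1) N‖ ^ 2
            = ((k : ℝ) + 1) ^ 2 * (‖Sf‖ ^ 2 / Real.log N ^ 2) := by
          have h1 : ‖convPow b (k + 1) N‖ = ((k : ℝ) + 1) * ‖Sf‖ / Real.log N := by
            rw [eq_div_iff hlog.ne']
            linarith [hnorm]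
          rw [h1]
          field_simp
        rw [if_pos (by omega : 1 ≤ N), if_pos hN, hsq,
          ENNReal.ofReal_mul (by positivity)]
    calc S (k + 1)
        = ∑' N : ℕ, (ENNReal.ofReal (((k : ℝ) + 1) ^ 2) *
            (if 2 ≤ N then
              ENNReal.ofReal
                (‖∑ d ∈ N.divisors.filter (fun d => 2 ≤ d),
                    b d * (Real.log d : ℂ) * convPow b k (N / d)‖ ^ 2 / Real.log N ^ 2)
            else 0)) := by simp only [hS]; exact tsum_congr hterm
      _ = ENNReal.ofReal (((k : ℝ) + 1) ^ 2) *
            ∑' N : ℕ, (if 2 ≤ N then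
              ENNReal.ofReal
                (‖∑ d ∈ N.divisors.filter (fun d => 2 ≤ d),
                    b d * (Real.log d : ℂ) * convPow b k (N / d)‖ ^ 2 / Real.log N ^ 2)
            else 0) := ENNReal.tsum_mul_left
      _ ≤ ENNReal.ofReal (((k : ℝ) + 1) ^ 2) * (ENNReal.ofReal (C ^ 2) * S k) := by
          exact mul_le_mul_right (hbound (convPow b k)) _
  have main : ∀ k : ℕ, S k ≤ ENNReal.ofReal ((k.factorial : ℝ) ^ 2 * C ^ (2 * k)) := by
    intro k
    induction k with
    | zero => rw [hS0]; simp
    | succ k ih =>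
      refine (hstep k).trans ?_
      calc ENNReal.ofReal (((k : ℝ) + 1) ^ 2) * (ENNReal.ofReal (C ^ 2) * S k)
          ≤ ENNReal.ofReal (((k : ℝ) + 1) ^ 2) *
            (ENNReal.ofReal (C ^ 2) * ENNReal.ofReal ((k.factorial : ℝ) ^ 2 * C ^ (2 * k))) :=
            mul_le_mul_right (mul_le_mul_right ih _) _
        _ = ENNReal.ofReal (((k + 1).factorial : ℝ) ^ 2 * C ^ (2 * (k + 1))) := by
            rw [← ENNReal.ofReal_mul (by positivity), ← ENNReal.ofReal_mul (by positivity)]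
            congr 1
            rw [Nat.factorial_succ]
            push_cast
            ring
  exact fun k _ => main k
end
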